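/- arXiv:1702.02762 — 3 statements merged into one kernel-verified Lean document; each statement's English description precedes it below -/
import Mathlib

section
/- For each n ∈ ℕ, the set Sₙ of all elements of L²(Ω, ℙ) admitting a representative measurable with respect to the σ-field generated by ζ₀, …, ζₙ is a closed linear subspace of L²(Ω, ℙ) of dimension 2^{n+1}, and the family {Z_σ : σ ⊆ {0,…,n}} is an orthonormal basis of Sₙ. -/
open MeasureTheory ProbabilityTheory
open scoped RealInnerProductSpace ENNReal

noncomputable section

/-- `Ω = {-1,1}^ℕ`, with the two-point set `{-1,1}` coded by `Bool`
(`true` codes `1`, `false` codes `-1`). -/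
abbrev Omega : Type := ℕ → Bool

/-- The canonical projection `ζₙ(ω) = ω(n) ∈ {-1,1}`. -/
def zeta (n : ℕ) (ω : Omega) : ℝ := if ω n then 1 else -1

/-- `Zₙ = (ζₙ + qₙ - pₙ)/(2√(pₙ qₙ))`, as a pointwise function on `Ω`. -/
def Zf (p : ℕ → ℝ) (n : ℕ) (ω : Omega) : ℝ :=
  (zeta n ω + (1 - p n) - p n) / (2 * Real.sqrt (p n * (1 - p n)))

/-- `Z_σ = ∏_{j∈σ} Z_j`, as a pointwise function on `Ω` (`Z_∅ = 1`). -/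
def ZSf (p : ℕ → ℝ) (σ : Finset ℕ) (ω : Omega) : ℝ := ∏ j ∈ σ, Zf p j ω

lemma measurable_ZSf (p : ℕ → ℝ) (σ : Finset ℕ) : Measurable (ZSf p σ) := by
  apply Finset.measurable_prod
  intro j _
  unfold Zf zeta
  apply Measurable.div _ measurable_const
  apply Measurable.sub _ measurable_const
  apply Measurable.add _ measurable_const
  exact (Measurable.of_discrete (f := fun b : Bool => if b = true then (1:ℝ) else -1)).comp
    (measurable_pi_apply j)

/-- A pointwise bound for `Z_j`. -/
def Mb (p : ℕ → ℝ) (j : ℕ) : ℝ :=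
  max |(1 + (1 - p j) - p j) / (2 * Real.sqrt (p j * (1 - p j)))|
      |(-1 + (1 - p j) - p j) / (2 * Real.sqrt (p j * (1 - p j)))|

lemma abs_Zf_le (p : ℕ → ℝ) (j : ℕ) (ω : Omega) : |Zf p j ω| ≤ Mb p j := by
  unfold Zf zeta Mb
  cases h : ω j
  · simpa using le_max_right _ _
  · simpa using le_max_left _ _

lemma memLp_ZSf (p : ℕ → ℝ) (P : Measure Omega) [IsProbabilityMeasure P] (σ : Finset ℕ) :
    MemLp (ZSf p σ) 2 P := by
  refine MemLp.of_bound (measurable_ZSf p σ).aestronglyMeasurable (∏ j ∈ σ, Mb p j) ?_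
  filter_upwards with ω
  rw [Real.norm_eq_abs]
  calc |∏ j ∈ σ, Zf p j ω| = ∏ j ∈ σ, |Zf p j ω| := Finset.abs_prod σ _
  _ ≤ ∏ j ∈ σ, Mb p j :=
      Finset.prod_le_prod (fun j _ => abs_nonneg _) (fun j _ => abs_Zf_le p j ω)

/-- `Z_σ` as an element of the real Hilbert space `L²(Ω, ℙ)`. -/
def ZLp (p : ℕ → ℝ) (P : Measure Omega) [IsProbabilityMeasure P] (σ : Finset ℕ) :
    Lp ℝ 2 P :=
  (memLp_ZSf p P σ).toLp _

/-- The `w`-counting measure `#_w(σ) = ∑_{j∈σ} w(j)`. -/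
def cw (w : ℕ → ℝ) (σ : Finset ℕ) : ℝ := ∑ j ∈ σ, w j

/-- The domain `D_w = {ξ ∈ L²(Ω,ℙ) : ∑_{σ∈Γ} #_w(σ) |⟨Z_σ, ξ⟩|² < ∞}`. -/
def Dw (p : ℕ → ℝ) (P : Measure Omega) [IsProbabilityMeasure P] (w : ℕ → ℝ) :
    Set (Lp ℝ 2 P) :=
  {ξ | Summable fun σ : Finset ℕ => cw w σ * ⟪ZLp p P σ, ξ⟫ ^ 2}

/-- The `w`-energy form `E_w(ξ, η) = ∑_{k=0}^∞ w(k) ⟨∂ₖξ, ∂ₖη⟩`, where `D k` plays the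
role of the annihilation operator `∂ₖ`. -/
def Ew {P : Measure Omega} (w : ℕ → ℝ)
    (D : ℕ → (Lp ℝ 2 P →L[ℝ] Lp ℝ 2 P)) (ξ η : Lp ℝ 2 P) : ℝ :=
  ∑' k, w k * ⟪D k ξ, D k η⟫

/-- The σ-field on `Ω` generated by the coordinates `ζ₀, …, ζₙ`. -/
def Fn (n : ℕ) : MeasurableSpace Omega :=
  ⨆ i ∈ Finset.range (n + 1),
    MeasurableSpace.comap (fun ω : Omega => zeta i ω) (inferInstance : MeasurableSpace ℝ)

/-- `Sₙ`: elements of `L²(Ω,ℙ)` having a representative measurable w.r.t. `σ(ζ₀, …, ζₙ)`. -/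
def Sn (p : ℕ → ℝ) (P : Measure Omega) [IsProbabilityMeasure P] (n : ℕ) :
    Set (Lp ℝ 2 P) :=
  {ξ | ∃ g : Omega → ℝ, Measurable[Fn n] g ∧ (ξ : Omega → ℝ) =ᵐ[P] g}


/-! ### Auxiliary lemmas -/

/-- The value of `Zf` when the coordinate is `true`. -/
def Av (p : ℕ → ℝ) (i : ℕ) : ℝ := (1 + (1 - p i) - p i) / (2 * Real.sqrt (p i * (1 - p i)))

/-- The value of `Zf` when the coordinate is `false`. -/
def Bv (p : ℕ → ℝ) (i : ℕ) : ℝ := (-1 + (1 - p i) - p i) / (2 * Real.sqrt (p i * (1 - p i)))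

lemma Zf_eq (p : ℕ → ℝ) (j : ℕ) (ω : Omega) :
    Zf p j ω = if ω j then Av p j else Bv p j := by
  unfold Zf zeta Av Bv
  cases h : ω j <;> simp [h]

lemma integral_coord (p : ℕ → ℝ) (P : Measure Omega) [IsProbabilityMeasure P]
    (hp : ∀ n, 0 < p n ∧ p n < 1)
    (hdist : ∀ n, P {ω : Omega | ω n = true} = ENNReal.ofReal (p n))
    (j : ℕ) (g : Bool → ℝ) :
    ∫ ω, g (ω j) ∂P = p j * g true + (1 - p j) * g false := by
  have hA : MeasurableSet {ω : Omega | ω j = true} := by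
    have h : {ω : Omega | ω j = true} = (fun ω : Omega => ω j) ⁻¹' {true} := by
      ext ω; simp
    rw [h]; exact measurable_pi_apply j (measurableSet_singleton true)
  have hrw : (fun ω : Omega => g (ω j)) =
      fun ω => ({ω : Omega | ω j = true}).indicator (fun _ => g true) ω
        + ({ω : Omega | ω j = true})ᶜ.indicator (fun _ => g false) ω := by
    funext ω; cases hb : ω j <;> simp [Set.indicator, hb]
  rw [hrw, integral_add ((integrable_const _).indicator hA)
    ((integrable_const _).indicator hA.compl),
    integral_indicator_const _ hA, integral_indicator_const _ hA.compl]
  have h1 : P {ω : Omega | ω j = true} = ENNReal.ofReal (p j) := hdist j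
  have h2 : P ({ω : Omega | ω j = true})ᶜ = ENNReal.ofReal (1 - p j) := by
    rw [measure_compl hA (measure_ne_top _ _), measure_univ, h1,
      ENNReal.ofReal_sub _ (hp j).1.le, ENNReal.ofReal_one]
  rw [measureReal_def, measureReal_def, h1, h2, ENNReal.toReal_ofReal (hp j).1.le,
    ENNReal.toReal_ofReal (by linarith [(hp j).2]), smul_eq_mul, smul_eq_mul]

lemma integral_Zf (p : ℕ → ℝ) (P : Measure Omega) [IsProbabilityMeasure P]
    (hp : ∀ n, 0 < p n ∧ p n < 1)
    (hdist : ∀ n, P {ω : Omega | ω n = true} = ENNReal.ofReal (p n)) (j : ℕ) :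
    ∫ ω, Zf p j ω ∂P = 0 := by
  have h : ∫ ω, Zf p j ω ∂P =
      ∫ ω, (fun b : Bool => ((if b then (1:ℝ) else -1) + (1 - p j) - p j) /
        (2 * Real.sqrt (p j * (1 - p j)))) (ω j) ∂P := rfl
  rw [h, integral_coord p P hp hdist j
    (fun b : Bool => ((if b then (1:ℝ) else -1) + (1 - p j) - p j) /
      (2 * Real.sqrt (p j * (1 - p j))))]
  have key : p j * ((1 + (1 - p j) - p j) / (2 * Real.sqrt (p j * (1 - p j))))
      + (1 - p j) * ((-1 + (1 - p j) - p j) / (2 * Real.sqrt (p j * (1 - p j))))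
      = (p j * (1 + (1 - p j) - p j) + (1 - p j) * (-1 + (1 - p j) - p j)) /
        (2 * Real.sqrt (p j * (1 - p j))) := by ring
  have hnum : p j * (1 + (1 - p j) - p j) + (1 - p j) * (-1 + (1 - p j) - p j) = 0 := by ring
  simp only [if_true, Bool.false_eq_true, if_false]
  rw [key, hnum, zero_div]

lemma integral_Zf_sq (p : ℕ → ℝ) (P : Measure Omega) [IsProbabilityMeasure P]
    (hp : ∀ n, 0 < p n ∧ p n < 1)
    (hdist : ∀ n, P {ω : Omega | ω n = true} = ENNReal.ofReal (p n)) (j : ℕ) :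
    ∫ ω, Zf p j ω * Zf p j ω ∂P = 1 := by
  have h : ∫ ω, Zf p j ω * Zf p j ω ∂P =
      ∫ ω, (fun b : Bool => (((if b then (1:ℝ) else -1) + (1 - p j) - p j) /
        (2 * Real.sqrt (p j * (1 - p j)))) * (((if b then (1:ℝ) else -1) + (1 - p j) - p j) /
        (2 * Real.sqrt (p j * (1 - p j))))) (ω j) ∂P := rfl
  rw [h, integral_coord p P hp hdist j
    (fun b : Bool => (((if b then (1:ℝ) else -1) + (1 - p j) - p j) /
      (2 * Real.sqrt (p j * (1 - p j)))) * (((if b then (1:ℝ) else -1) + (1 - p j) - p j) /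
      (2 * Real.sqrt (p j * (1 - p j)))))]
  have hpq : 0 < p j * (1 - p j) := mul_pos (hp j).1 (by linarith [(hp j).2])
  have hd2 : (2 * Real.sqrt (p j * (1 - p j))) ^ 2 = 4 * (p j * (1 - p j)) := by
    rw [mul_pow, Real.sq_sqrt hpq.le]; ring
  have key : p j * ((1 + (1 - p j) - p j) / (2 * Real.sqrt (p j * (1 - p j))) *
        ((1 + (1 - p j) - p j) / (2 * Real.sqrt (p j * (1 - p j)))))
      + (1 - p j) * ((-1 + (1 - p j) - p j) / (2 * Real.sqrt (p j * (1 - p j))) *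
        ((-1 + (1 - p j) - p j) / (2 * Real.sqrt (p j * (1 - p j)))))
      = (p j * (1 + (1 - p j) - p j) ^ 2 + (1 - p j) * (-1 + (1 - p j) - p j) ^ 2) /
        (2 * Real.sqrt (p j * (1 - p j))) ^ 2 := by ring
  have hnum : p j * (1 + (1 - p j) - p j) ^ 2 + (1 - p j) * (-1 + (1 - p j) - p j) ^ 2
      = 4 * (p j * (1 - p j)) := by ring
  simp only [if_true, Bool.false_eq_true, if_false]
  rw [key, hnum, hd2, div_self (by positivity)]

lemma integral_finset_prod_indep (P : Measure Omega) [IsProbabilityMeasure P]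
    (Y : ℕ → Omega → ℝ)
    (hind : iIndepFun Y P)
    (hm : ∀ j, Measurable (Y j)) (s : Finset ℕ) :
    ∫ ω, ∏ j ∈ s, Y j ω ∂P = ∏ j ∈ s, ∫ ω, Y j ω ∂P := by
  classical
  induction s using Finset.induction_on with
  | empty => simp
  | @insert i s hi ih =>
    have hIndep : IndepFun (Y i) (∏ j ∈ s, Y j) P :=
      (hind.indepFun_finsetProd_of_notMem hm hi).symm
    have hprodm : Measurable (∏ j ∈ s, Y j) := by
      have : (∏ j ∈ s, Y j) = fun a => ∏ j ∈ s, Y j a := by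
        funext a; exact Finset.prod_apply a s Y
      rw [this]; exact Finset.measurable_prod s fun j _ => hm j
    have hmul := hIndep.integral_mul_eq_mul_integral (hm i).aestronglyMeasurable hprodm.aestronglyMeasurable
    have h1 : (fun ω => ∏ j ∈ insert i s, Y j ω) = (Y i * ∏ j ∈ s, Y j) := by
      funext ω
      simp [Finset.prod_insert hi, Finset.prod_apply]
    calc ∫ ω, ∏ j ∈ insert i s, Y j ω ∂P = ∫ ω, (Y i * ∏ j ∈ s, Y j) ω ∂P := by rw [h1]
      _ = (∫ ω, Y i ω ∂P) * ∫ ω, (∏ j ∈ s, Y j) ω ∂P := hmul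
      _ = (∫ ω, Y i ω ∂P) * ∫ ω, ∏ j ∈ s, Y j ω ∂P := by
          congr 1; apply integral_congr_ae; filter_upwards with ω
          exact Finset.prod_apply ω s Y
      _ = ∏ j ∈ insert i s, ∫ ω, Y j ω ∂P := by rw [ih, Finset.prod_insert hi]

lemma coeFn_ZLp (p : ℕ → ℝ) (P : Measure Omega) [IsProbabilityMeasure P] (σ : Finset ℕ) :
    (ZLp p P σ : Omega → ℝ) =ᵐ[P] ZSf p σ :=
  (memLp_ZSf p P σ).coeFn_toLp

lemma inner_ZLp (p : ℕ → ℝ) (P : Measure Omega) [IsProbabilityMeasure P]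
    (hp : ∀ n, 0 < p n ∧ p n < 1)
    (hdist : ∀ n, P {ω : Omega | ω n = true} = ENNReal.ofReal (p n))
    (hindep : iIndepFun (fun n (ω : Omega) => ω n) P)
    (σ τ : Finset ℕ) :
    ⟪ZLp p P σ, ZLp p P τ⟫ = if σ = τ then (1:ℝ) else 0 := by
  classical
  set Y : ℕ → Omega → ℝ :=
    fun j ω => Zf p j ω * (if j ∈ σ ∩ τ then Zf p j ω else 1) with hY
  have hindY : iIndepFun Y P := by
    exact hindep.comp
      (fun j (b : Bool) => ((if b then (1:ℝ) else -1) + (1 - p j) - p j) /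
          (2 * Real.sqrt (p j * (1 - p j))) *
        (if j ∈ σ ∩ τ then ((if b then (1:ℝ) else -1) + (1 - p j) - p j) /
          (2 * Real.sqrt (p j * (1 - p j))) else 1))
      (fun j => Measurable.of_discrete)
  have hZm : ∀ j, Measurable (Zf p j) := by
    intro j
    unfold Zf zeta
    apply Measurable.div _ measurable_const
    apply Measurable.sub _ measurable_const
    apply Measurable.add _ measurable_const
    exact (Measurable.of_discrete (f := fun b : Bool => if b = true then (1:ℝ) else -1)).comp
      (measurable_pi_apply j)
  have hmY : ∀ j, Measurable (Y j) := by
    intro j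
    by_cases h : j ∈ σ ∩ τ <;> simp only [hY, h, if_true, if_false, mul_one]
    · exact (hZm j).mul (hZm j)
    · exact hZm j
  have hinner : ⟪ZLp p P σ, ZLp p P τ⟫ = ∫ ω, ZSf p σ ω * ZSf p τ ω ∂P := by
    rw [L2.inner_def]
    apply integral_congr_ae
    filter_upwards [coeFn_ZLp p P σ, coeFn_ZLp p P τ] with ω h1 h2
    rw [h1, h2]
    simp [RCLike.inner_apply]
    ring
  have hsplit : ∀ ω, ZSf p σ ω * ZSf p τ ω = ∏ j ∈ σ ∪ τ, Y j ω := by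
    intro ω
    calc ZSf p σ ω * ZSf p τ ω
        = (∏ j ∈ σ ∪ τ, Zf p j ω) * ∏ j ∈ σ ∩ τ, Zf p j ω := by
          simp only [ZSf]; rw [Finset.prod_union_inter]
      _ = (∏ j ∈ σ ∪ τ, Zf p j ω) * ∏ j ∈ (σ ∪ τ) ∩ (σ ∩ τ), Zf p j ω := by
          rw [Finset.inter_eq_right.mpr
            (Finset.inter_subset_left.trans Finset.subset_union_left)]
      _ = (∏ j ∈ σ ∪ τ, Zf p j ω) * ∏ j ∈ σ ∪ τ, (if j ∈ σ ∩ τ then Zf p j ω else 1) := by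
          rw [Finset.prod_ite_mem]
      _ = ∏ j ∈ σ ∪ τ, Y j ω := Finset.prod_mul_distrib.symm
  have hint : ∀ j, ∫ ω, Y j ω ∂P = if j ∈ σ ∩ τ then 1 else 0 := by
    intro j
    by_cases h : j ∈ σ ∩ τ <;> simp only [hY, h, if_true, if_false, mul_one]
    · exact integral_Zf_sq p P hp hdist j
    · exact integral_Zf p P hp hdist j
  rw [hinner]
  simp only [hsplit]
  rw [integral_finset_prod_indep P Y hindY hmY (σ ∪ τ)]
  by_cases h : σ = τ
  · subst h
    rw [if_pos rfl]
    apply Finset.prod_eq_one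
    intro j hj
    rw [hint j, if_pos]
    simpa using hj
  · rw [if_neg h]
    obtain ⟨j, hj1, hj2⟩ : ∃ j ∈ σ ∪ τ, j ∉ σ ∩ τ := by
      by_contra hc
      push_neg at hc
      apply h
      apply Finset.Subset.antisymm
      · intro x hx
        exact (Finset.mem_inter.mp (hc x (Finset.mem_union_left _ hx))).2
      · intro x hx
        exact (Finset.mem_inter.mp (hc x (Finset.mem_union_right _ hx))).1
    exact Finset.prod_eq_zero hj1 (by rw [hint j, if_neg hj2])

/-! ### Measurability with respect to `Fn n` -/

lemma zeta_Fn_meas {n i : ℕ} (hi : i ∈ Finset.range (n + 1)) :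
    Measurable[Fn n] (fun ω : Omega => zeta i ω) := by
  rw [measurable_iff_comap_le]
  exact le_iSup₂ (f := fun (i : ℕ) (_ : i ∈ Finset.range (n + 1)) =>
    MeasurableSpace.comap (fun ω : Omega => zeta i ω)
      (inferInstance : MeasurableSpace ℝ)) i hi

lemma Zf_Fn_meas (p : ℕ → ℝ) {n i : ℕ} (hi : i ∈ Finset.range (n + 1)) :
    Measurable[Fn n] (Zf p i) := by
  unfold Zf
  exact (((zeta_Fn_meas hi).add measurable_const).sub measurable_const).div measurable_const

lemma ZSf_Fn_meas (p : ℕ → ℝ) {n : ℕ} {σ : Finset ℕ} (hσ : σ ⊆ Finset.range (n + 1)) :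
    Measurable[Fn n] (ZSf p σ) :=
  Finset.measurable_prod σ fun j hj => Zf_Fn_meas p (hσ hj)

lemma Fn_le_comap (n : ℕ) :
    Fn n ≤ MeasurableSpace.comap (fun ω : Omega => fun i : Fin (n + 1) => ω i.1) ⊤ := by
  refine iSup_le fun i => iSup_le fun hi => ?_
  have hi' : i < n + 1 := Finset.mem_range.mp hi
  have heq : (fun ω : Omega => zeta i ω) =
      (fun v : Fin (n + 1) → Bool => if v ⟨i, hi'⟩ then (1:ℝ) else -1) ∘
        (fun ω : Omega => fun k : Fin (n + 1) => ω k.1) := rfl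
  rw [heq, ← MeasurableSpace.comap_comp]
  exact MeasurableSpace.comap_mono le_top

lemma const_on_atoms {n : ℕ} {g : Omega → ℝ} (hg : Measurable[Fn n] g)
    {ω ω' : Omega} (h : ∀ i, i < n + 1 → ω i = ω' i) : g ω = g ω' := by
  have hs : MeasurableSet[Fn n] (g ⁻¹' {g ω}) := hg (measurableSet_singleton (g ω))
  obtain ⟨T, -, hT⟩ := Fn_le_comap n _ hs
  have hω : ω ∈ (fun ω : Omega => fun i : Fin (n + 1) => ω i.1) ⁻¹' T := by
    rw [hT]; exact rfl
  have hfun : (fun i : Fin (n + 1) => ω' i.1) = fun i : Fin (n + 1) => ω i.1 :=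
    funext fun i => (h i.1 i.2).symm
  have hω' : ω' ∈ (fun ω : Omega => fun i : Fin (n + 1) => ω i.1) ⁻¹' T := by
    simp only [Set.mem_preimage]
    rw [hfun]
    exact hω
  rw [hT] at hω'
  exact hω'.symm

/-! ### Spanning -/

def extB (n : ℕ) (b : Fin (n + 1) → Bool) : Omega :=
  fun k => if h : k < n + 1 then b ⟨k, h⟩ else false

def alf (p : ℕ → ℝ) (i : ℕ) (t : Bool) : ℝ :=
  if t then -Bv p i / (Av p i - Bv p i) else Av p i / (Av p i - Bv p i)

def bet (p : ℕ → ℝ) (i : ℕ) (t : Bool) : ℝ :=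
  if t then 1 / (Av p i - Bv p i) else -(1 / (Av p i - Bv p i))

lemma AB_sub_ne (p : ℕ → ℝ) (i : ℕ) (hp : 0 < p i ∧ p i < 1) :
    Av p i - Bv p i ≠ 0 := by
  have hpq : 0 < p i * (1 - p i) := mul_pos hp.1 (by linarith [hp.2])
  have hd : 0 < 2 * Real.sqrt (p i * (1 - p i)) :=
    mul_pos two_pos (Real.sqrt_pos.mpr hpq)
  unfold Av Bv
  rw [div_sub_div_same]
  have h2 : (1 + (1 - p i) - p i) - (-1 + (1 - p i) - p i) = 2 := by ring
  rw [h2]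
  exact (div_pos two_pos hd).ne'

lemma chi_eq (p : ℕ → ℝ) (hp : ∀ n, 0 < p n ∧ p n < 1) (i : ℕ) (t : Bool) (ω : Omega) :
    (if ω i = t then (1:ℝ) else 0) = alf p i t + bet p i t * Zf p i ω := by
  have hne := AB_sub_ne p i (hp i)
  rw [Zf_eq]
  cases hb : ω i <;> cases t <;>
    simp only [alf, bet, hb, if_true, if_false, Bool.false_eq_true, Bool.true_eq_false] <;>
    field_simp <;> ring

lemma g_mem_span (p : ℕ → ℝ) (hp : ∀ n, 0 < p n ∧ p n < 1) (n : ℕ) {g : Omega → ℝ}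
    (hg : ∀ ω ω' : Omega, (∀ i, i < n + 1 → ω i = ω' i) → g ω = g ω') :
    g ∈ Submodule.span ℝ (Set.range
      (fun σ : {σ : Finset ℕ // σ ⊆ Finset.range (n + 1)} => ZSf p σ.1)) := by
  classical
  have hpt : ∀ ω : Omega, g ω = ∑ b : Fin (n + 1) → Bool,
      g (extB n b) * ∏ i : Fin (n + 1), (if ω i.1 = b i then (1:ℝ) else 0) := by
    intro ω
    rw [Fintype.sum_eq_single (fun i : Fin (n + 1) => ω i.1) ?_]
    · rw [Finset.prod_eq_one (fun i _ => if_pos rfl), mul_one]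
      apply hg
      intro i hi
      simp [extB, hi]
    · intro b hb
      have hne : ¬ ∀ i : Fin (n + 1), ω i.1 = b i := by
        intro hall
        exact hb (funext fun i => (hall i).symm)
      obtain ⟨i, hi⟩ := not_forall.mp hne
      rw [Finset.prod_eq_zero (Finset.mem_univ i)
        (if_neg hi : (if ω i.1 = b i then (1:ℝ) else 0) = 0), mul_zero]
  have hexp : ∀ (b : Fin (n + 1) → Bool) (ω : Omega),
      (∏ i : Fin (n + 1), (if ω i.1 = b i then (1:ℝ) else 0)) =
      ∑ t ∈ (Finset.univ : Finset (Fin (n + 1))).powerset,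
        (∏ i ∈ t, alf p i.1 (b i)) *
          ((∏ i ∈ Finset.univ \ t, bet p i.1 (b i)) *
            ZSf p ((Finset.univ \ t).image Fin.val) ω) := by
    intro b ω
    rw [Finset.prod_congr rfl (fun i _ => chi_eq p hp i.1 (b i) ω), Finset.prod_add]
    apply Finset.sum_congr rfl
    intro t _
    congr 1
    rw [Finset.prod_mul_distrib]
    congr 1
    unfold ZSf
    exact (Finset.prod_image (f := fun j => Zf p j ω) (g := Fin.val)
      fun x _ y _ h => Fin.val_injective h).symm
  have hfun : g = ∑ b : Fin (n + 1) → Bool,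
      ∑ t ∈ (Finset.univ : Finset (Fin (n + 1))).powerset,
        (g (extB n b) * ((∏ i ∈ t, alf p i.1 (b i)) *
          (∏ i ∈ Finset.univ \ t, bet p i.1 (b i)))) •
            ZSf p ((Finset.univ \ t).image Fin.val) := by
    funext ω
    rw [hpt ω, Finset.sum_apply]
    apply Finset.sum_congr rfl
    intro b _
    rw [Finset.sum_apply, hexp b ω, Finset.mul_sum]
    apply Finset.sum_congr rfl
    intro t _
    simp only [Pi.smul_apply, smul_eq_mul]
    ring
  rw [hfun]
  apply Submodule.sum_mem
  intro b _
  apply Submodule.sum_mem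
  intro t _
  apply Submodule.smul_mem
  apply Submodule.subset_span
  refine ⟨⟨(Finset.univ \ t).image Fin.val, ?_⟩, rfl⟩
  intro j hj
  simp only [Finset.mem_image] at hj
  obtain ⟨i, -, rfl⟩ := hj
  exact Finset.mem_range.mpr i.2

set_option synthInstance.maxHeartbeats 1000000 in
lemma closed_aux (P : Measure Omega) [IsProbabilityMeasure P]
    (S : Submodule ℝ (Lp ℝ 2 P)) [FiniteDimensional ℝ S] :
    IsClosed (S : Set (Lp ℝ 2 P)) :=
  Submodule.closed_of_finiteDimensional S

lemma coeFn_sum_ZLp {ι : Type*} (p : ℕ → ℝ) (P : Measure Omega) [IsProbabilityMeasure P]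
    (s : Finset ι) (F : ι → Finset ℕ) (c : ι → ℝ) :
    (((∑ i ∈ s, c i • ZLp p P (F i)) : Lp ℝ 2 P) : Omega → ℝ)
      =ᵐ[P] fun ω => ∑ i ∈ s, c i * ZSf p (F i) ω := by
  classical
  induction s using Finset.induction_on with
  | empty =>
    simp only [Finset.sum_empty]
    filter_upwards [Lp.coeFn_zero (E := ℝ) (p := 2) (μ := P)] with ω h
    simpa using h
  | @insert a s ha ih =>
    rw [Finset.sum_insert ha]
    filter_upwards [Lp.coeFn_add (c a • ZLp p P (F a)) (∑ i ∈ s, c i • ZLp p P (F i)),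
      Lp.coeFn_smul (c a) (ZLp p P (F a)), coeFn_ZLp p P (F a), ih] with ω h1 h2 h3 h4
    simp only [h1, Pi.add_apply, h2, Pi.smul_apply, smul_eq_mul, h3, h4,
      Finset.sum_insert ha]

theorem Sn_closed_subspace_dim
    (p : ℕ → ℝ) (P : Measure Omega) [IsProbabilityMeasure P]
    (hp : ∀ n, 0 < p n ∧ p n < 1)
    (hdist : ∀ n, P {ω : Omega | ω n = true} = ENNReal.ofReal (p n))
    (hindep : iIndepFun (fun n (ω : Omega) => ω n) P)
    (n : ℕ) :
    ∃ S : Submodule ℝ (Lp ℝ 2 P),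
      (S : Set (Lp ℝ 2 P)) = Sn p P n ∧
      IsClosed (S : Set (Lp ℝ 2 P)) ∧
      Module.finrank ℝ S = 2 ^ (n + 1) ∧
      Orthonormal ℝ
        (fun σ : {σ : Finset ℕ // σ ⊆ Finset.range (n + 1)} => ZLp p P σ.1) ∧
      Submodule.span ℝ
        {x : Lp ℝ 2 P | ∃ σ : Finset ℕ, σ ⊆ Finset.range (n + 1) ∧ x = ZLp p P σ} = S := by
  classical
  haveI fint : Fintype {σ : Finset ℕ // σ ⊆ Finset.range (n + 1)} :=
    Fintype.subtype ((Finset.range (n + 1)).powerset) (fun σ => Finset.mem_powerset)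
  set fam : {σ : Finset ℕ // σ ⊆ Finset.range (n + 1)} → Lp ℝ 2 P :=
    fun σ => ZLp p P σ.1 with hfam
  have hseteq : {x : Lp ℝ 2 P | ∃ σ : Finset ℕ, σ ⊆ Finset.range (n + 1) ∧ x = ZLp p P σ}
      = Set.range fam := by
    ext x
    constructor
    · rintro ⟨σ, hσ, rfl⟩; exact ⟨⟨σ, hσ⟩, rfl⟩
    · rintro ⟨σ, rfl⟩; exact ⟨σ.1, σ.2, rfl⟩
  have honb : Orthonormal ℝ fam := by
    rw [orthonormal_iff_ite]
    intro σ τ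
    rw [hfam]
    rw [inner_ZLp p P hp hdist hindep σ.1 τ.1]
    by_cases h : σ = τ
    · simp [h]
    · rw [if_neg h, if_neg (fun hh => h (Subtype.ext hh))]
  haveI hfd : FiniteDimensional ℝ (Submodule.span ℝ (Set.range fam)) :=
    FiniteDimensional.span_of_finite ℝ (Set.finite_range fam)
  refine ⟨Submodule.span ℝ (Set.range fam), ?_, ?_, ?_, ?_, ?_⟩
  · -- set equality with Sn
    apply Set.Subset.antisymm
    · -- span ⊆ Sn
      intro x hx
      induction hx using Submodule.span_induction with
      | mem x hxx =>
        obtain ⟨σ, rfl⟩ := hxx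
        exact ⟨ZSf p σ.1, ZSf_Fn_meas p σ.2, coeFn_ZLp p P σ.1⟩
      | zero =>
        exact ⟨0, @measurable_const _ _ _ (Fn n) 0, Lp.coeFn_zero ℝ 2 P⟩
      | add x y hx hy ihx ihy =>
        obtain ⟨g1, hg1, hae1⟩ := ihx
        obtain ⟨g2, hg2, hae2⟩ := ihy
        refine ⟨g1 + g2, Measurable.add hg1 hg2, ?_⟩
        filter_upwards [Lp.coeFn_add x y, hae1, hae2] with ω h1 h2 h3
        rw [Pi.add_apply, h1, Pi.add_apply, h2, h3]
      | smul a x hx ihx =>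
        obtain ⟨g1, hg1, hae1⟩ := ihx
        refine ⟨a • g1, Measurable.const_smul hg1 a, ?_⟩
        filter_upwards [Lp.coeFn_smul a x, hae1] with ω h1 h2
        rw [Pi.smul_apply, h1, Pi.smul_apply, h2]
    · -- Sn ⊆ span
      rintro ξ ⟨g, hgmeas, hae⟩
      have hag : ∀ ω ω' : Omega, (∀ i, i < n + 1 → ω i = ω' i) → g ω = g ω' :=
        fun ω ω' h => const_on_atoms hgmeas h
      obtain ⟨c, hc⟩ := (Submodule.mem_span_range_iff_exists_fun ℝ).mp (g_mem_span p hp n hag)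
      have hxi : ξ = ∑ σ : {σ : Finset ℕ // σ ⊆ Finset.range (n + 1)}, c σ • ZLp p P σ.1 := by
        apply Lp.ext
        filter_upwards [hae,
          coeFn_sum_ZLp p P Finset.univ
            (fun σ : {σ : Finset ℕ // σ ⊆ Finset.range (n + 1)} => σ.1) c] with ω h1 h2
        rw [h1, h2, ← hc, Finset.sum_apply]
        apply Finset.sum_congr rfl
        intro σ _
        simp
      rw [hxi]
      exact Submodule.sum_mem _ fun σ _ =>
        Submodule.smul_mem _ _ (Submodule.subset_span ⟨σ, rfl⟩)
  · exact closed_aux P _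
  · rw [finrank_span_eq_card honb.linearIndependent,
      Fintype.card_of_subtype ((Finset.range (n + 1)).powerset) (fun σ => Finset.mem_powerset),
      Finset.card_powerset, Finset.card_range]
  · exact honb
  · rw [hseteq]

end
end

section
/- For every ξ ∈ L²(Ω, ℙ), every contraction function C, and every k ∈ ℕ, the composition C∘ξ belongs to L²(Ω, ℙ) and ‖∂ₖ(C∘ξ)‖ ≤ ‖∂ₖξ‖. -/
open MeasureTheory ProbabilityTheory
open scoped RealInnerProductSpace ENNReal

noncomputable section

/-! ### Auxiliary development -/

section Aux

open MeasurableSpace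

variable (p : ℕ → ℝ) (P : Measure Omega) [IsProbabilityMeasure P]

/-- Update of the `k`-th coordinate. -/
def upd (k : ℕ) (b : Bool) (ω : Omega) : Omega := Function.update ω k b

lemma measurable_upd (k : ℕ) (b : Bool) : Measurable (upd k b) := by
  rw [measurable_pi_iff]
  intro j
  simp only [upd, Function.update_apply]
  split
  · exact measurable_const
  · exact measurable_pi_apply j

/-- The σ-algebra generated by the coordinates other than `k`. -/
def mOther (k : ℕ) : MeasurableSpace Omega :=
  ⨆ j ∈ ({k}ᶜ : Set ℕ), MeasurableSpace.comap (fun ω : Omega => ω j) ⊤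

lemma measurable_upd_mOther (k : ℕ) (b : Bool) :
    @Measurable Omega Omega (mOther k) _ (upd k b) := by
  refine @measurable_pi_lambda Omega ℕ (fun _ => Bool) (mOther k) _ (upd k b) ?_
  intro j
  by_cases h : j = k
  · subst h
    have : (fun ω : Omega => upd j b ω j) = fun _ => b := by
      funext ω; simp [upd]
    rw [this]
    exact measurable_const
  · have : (fun ω : Omega => upd k b ω j) = fun ω : Omega => ω j := by
      funext ω; simp [upd, Function.update_apply, h]
    rw [this]
    have hle : MeasurableSpace.comap (fun ω : Omega => ω j) ⊤ ≤ mOther k :=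
      le_biSup (fun j => MeasurableSpace.comap (fun ω : Omega => ω j) ⊤) h
    exact fun s _ => hle _ ⟨s, trivial, rfl⟩

/-- The weight of the coordinate value `b`. -/
def rk (k : ℕ) (b : Bool) : ℝ := if b then p k else 1 - p k

variable {p P}

lemma rk_pos (hp : ∀ n, 0 < p n ∧ p n < 1) (k : ℕ) (b : Bool) : 0 < rk p k b := by
  cases b <;> simp [rk] <;> [linarith [(hp k).2]; exact (hp k).1]

lemma measure_coord (hdist : ∀ n, P {ω : Omega | ω n = true} = ENNReal.ofReal (p n))
    (hp : ∀ n, 0 < p n ∧ p n < 1) (k : ℕ) (b : Bool) :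
    P {ω : Omega | ω k = b} = ENNReal.ofReal (rk p k b) := by
  cases b
  · have hms : MeasurableSet {ω : Omega | ω k = true} := by
      have he : {ω : Omega | ω k = true} = (fun ω : Omega => ω k) ⁻¹' {true} := rfl
      rw [he]
      exact (measurable_pi_apply k) (measurableSet_singleton true)
    have hc : {ω : Omega | ω k = false} = {ω : Omega | ω k = true}ᶜ := by
      ext ω; simp
    rw [hc, measure_compl hms (measure_ne_top _ _), hdist k, measure_univ]
    rw [show rk p k false = 1 - p k from rfl]
    rw [ENNReal.ofReal_sub _ (le_of_lt (hp k).1), ENNReal.ofReal_one]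
  · simpa [rk] using hdist k

lemma indep_coord_other
    (hindep : iIndepFun (fun n (ω : Omega) => ω n) P)
    (k : ℕ) :
    ProbabilityTheory.Indep
      (MeasurableSpace.comap (fun ω : Omega => ω k) ⊤) (mOther k) P := by
  have h_le : ∀ i : ℕ, MeasurableSpace.comap (fun ω : Omega => ω i) ⊤ ≤
      (inferInstance : MeasurableSpace Omega) := by
    intro i
    rw [← measurable_iff_comap_le]
    exact measurable_pi_apply i
  have h := ProbabilityTheory.indep_iSup_of_disjoint h_le hindep
    (disjoint_compl_right : Disjoint ({k} : Set ℕ) ({k}ᶜ))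
  have hsingle : (⨆ i ∈ ({k} : Set ℕ),
      MeasurableSpace.comap (fun ω : Omega => ω i) ⊤) =
      MeasurableSpace.comap (fun ω : Omega => ω k) ⊤ := by
    simp
  rw [hsingle] at h
  exact h

lemma map_upd_le (hp : ∀ n, 0 < p n ∧ p n < 1)
    (hdist : ∀ n, P {ω : Omega | ω n = true} = ENNReal.ofReal (p n))
    (hindep : iIndepFun (fun n (ω : Omega) => ω n) P)
    (k : ℕ) (b : Bool) :
    P.map (upd k b) ≤ (ENNReal.ofReal (rk p k b))⁻¹ • P := by
  rw [Measure.le_iff]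
  intro s hs
  rw [Measure.map_apply (measurable_upd k b) hs, Measure.smul_apply, smul_eq_mul]
  set A : Set Omega := upd k b ⁻¹' s with hA
  set B : Set Omega := {ω : Omega | ω k = b} with hB
  have hAm : MeasurableSet[mOther k] A := measurable_upd_mOther k b hs
  have hBm : MeasurableSet[MeasurableSpace.comap (fun ω : Omega => ω k) ⊤] B :=
    ⟨{b}, trivial, rfl⟩
  have hindep' := indep_coord_other hindep k
  have hmul : P (B ∩ A) = P B * P A := by
    exact ((ProbabilityTheory.indep_iff_forall_indepSet P).1 hindep' B A hBm
      hAm).measure_inter_eq_mul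
  have hinter : B ∩ A = B ∩ s := by
    ext ω
    simp only [Set.mem_inter_iff, hB, Set.mem_setOf_eq, hA, Set.mem_preimage]
    constructor
    · rintro ⟨h1, h2⟩
      refine ⟨h1, ?_⟩
      rwa [upd, ← h1, Function.update_eq_self] at h2
    · rintro ⟨h1, h2⟩
      refine ⟨h1, ?_⟩
      rwa [upd, ← h1, Function.update_eq_self]
  have hPB : P B = ENNReal.ofReal (rk p k b) := measure_coord hdist hp k b
  have hne : ENNReal.ofReal (rk p k b) ≠ 0 := by
    simp [ENNReal.ofReal_eq_zero, not_le, rk_pos hp k b]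
  have htop : ENNReal.ofReal (rk p k b) ≠ ⊤ := ENNReal.ofReal_ne_top
  have key : ENNReal.ofReal (rk p k b) * P A ≤ P s := by
    rw [← hPB, ← hmul, hinter]
    exact measure_mono Set.inter_subset_right
  calc P A = (ENNReal.ofReal (rk p k b))⁻¹ * (ENNReal.ofReal (rk p k b) * P A) := by
        rw [← mul_assoc, ENNReal.inv_mul_cancel hne htop, one_mul]
    _ ≤ (ENNReal.ofReal (rk p k b))⁻¹ * P s := mul_le_mul_right key _

lemma map_upd_ac (hp : ∀ n, 0 < p n ∧ p n < 1)
    (hdist : ∀ n, P {ω : Omega | ω n = true} = ENNReal.ofReal (p n))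
    (hindep : iIndepFun (fun n (ω : Omega) => ω n) P)
    (k : ℕ) (b : Bool) :
    P.map (upd k b) ≪ P :=
  (Measure.absolutelyContinuous_of_le (map_upd_le hp hdist hindep k b)).trans
    Measure.smul_absolutelyContinuous

lemma ae_upd (hp : ∀ n, 0 < p n ∧ p n < 1)
    (hdist : ∀ n, P {ω : Omega | ω n = true} = ENNReal.ofReal (p n))
    (hindep : iIndepFun (fun n (ω : Omega) => ω n) P)
    (k : ℕ) (b : Bool) {f g : Omega → ℝ} (h : f =ᵐ[P] g) :
    (fun ω => f (upd k b ω)) =ᵐ[P] (fun ω => g (upd k b ω)) := by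
  have h0 : P {x | f x ≠ g x} = 0 := by
    rw [Filter.EventuallyEq, ae_iff] at h
    exact h
  obtain ⟨N, hsub, hmeas, hnull⟩ := exists_measurable_superset_of_null h0
  rw [Filter.EventuallyEq, ae_iff]
  have hsub2 : {a | ¬ f (upd k b a) = g (upd k b a)} ⊆ upd k b ⁻¹' N :=
    fun ω hω => hsub hω
  refine measure_mono_null hsub2 ?_
  · have := map_upd_le hp hdist hindep k b
    have h1 : P (upd k b ⁻¹' N) = (P.map (upd k b)) N := by
      rw [Measure.map_apply (measurable_upd k b) hmeas]
    have h2 : (P.map (upd k b)) N ≤ (ENNReal.ofReal (rk p k b))⁻¹ • P N := by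
      rw [Measure.le_iff] at this
      have := this N hmeas
      rwa [Measure.smul_apply] at this
    rw [h1]
    refine le_antisymm ?_ zero_le
    calc (P.map (upd k b)) N ≤ (ENNReal.ofReal (rk p k b))⁻¹ • P N := h2
      _ = 0 := by rw [hnull, smul_eq_mul, mul_zero]

lemma aesm_comp_upd (hp : ∀ n, 0 < p n ∧ p n < 1)
    (hdist : ∀ n, P {ω : Omega | ω n = true} = ENNReal.ofReal (p n))
    (hindep : iIndepFun (fun n (ω : Omega) => ω n) P)
    (k : ℕ) (b : Bool) {f : Omega → ℝ} (hf : AEStronglyMeasurable f P) :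
    AEStronglyMeasurable (fun ω => f (upd k b ω)) P :=
  (hf.mono_ac (map_upd_ac hp hdist hindep k b)).comp_aemeasurable
    (measurable_upd k b).aemeasurable

lemma eLpNorm_comp_upd_le (hp : ∀ n, 0 < p n ∧ p n < 1)
    (hdist : ∀ n, P {ω : Omega | ω n = true} = ENNReal.ofReal (p n))
    (hindep : iIndepFun (fun n (ω : Omega) => ω n) P)
    (k : ℕ) (b : Bool) {f : Omega → ℝ} (hf : AEStronglyMeasurable f P) :
    eLpNorm (fun ω => f (upd k b ω)) 2 P ≤
      (ENNReal.ofReal (rk p k b))⁻¹ ^ (1 / (2:ℝ≥0∞)).toReal * eLpNorm f 2 P := by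
  have hg : AEStronglyMeasurable f (P.map (upd k b)) :=
    hf.mono_ac (map_upd_ac hp hdist hindep k b)
  calc eLpNorm (fun ω => f (upd k b ω)) 2 P
      = eLpNorm f 2 (P.map (upd k b)) :=
        (eLpNorm_map_measure hg (measurable_upd k b).aemeasurable).symm
    _ ≤ eLpNorm f 2 ((ENNReal.ofReal (rk p k b))⁻¹ • P) :=
        eLpNorm_mono_measure f (map_upd_le hp hdist hindep k b)
    _ = (ENNReal.ofReal (rk p k b))⁻¹ ^ (1 / (2:ℝ≥0∞)).toReal * eLpNorm f 2 P := by
        rw [eLpNorm_smul_measure_of_ne_top (by norm_num : (2:ℝ≥0∞) ≠ ⊤), smul_eq_mul]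

end Aux


section TOp

variable (p : ℕ → ℝ) (P : Measure Omega) [IsProbabilityMeasure P]

/-- The discrete gradient (annihilation) operator, pointwise. -/
def Tfun (k : ℕ) (f : Omega → ℝ) : Omega → ℝ :=
  fun ω => Real.sqrt (p k * (1 - p k)) * (f (upd k true ω) - f (upd k false ω))

variable {p P}

lemma Tfun_add (k : ℕ) (f g : Omega → ℝ) :
    Tfun p k (f + g) = Tfun p k f + Tfun p k g := by
  funext ω; simp only [Tfun, Pi.add_apply]; ring

lemma Tfun_smul (k : ℕ) (a : ℝ) (f : Omega → ℝ) :
    Tfun p k (a • f) = a • Tfun p k f := by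
  funext ω; simp only [Tfun, Pi.smul_apply, smul_eq_mul]; ring

lemma Tfun_congr (hp : ∀ n, 0 < p n ∧ p n < 1)
    (hdist : ∀ n, P {ω : Omega | ω n = true} = ENNReal.ofReal (p n))
    (hindep : iIndepFun (fun n (ω : Omega) => ω n) P)
    (k : ℕ) {f g : Omega → ℝ} (h : f =ᵐ[P] g) :
    Tfun p k f =ᵐ[P] Tfun p k g := by
  filter_upwards [ae_upd hp hdist hindep k true h, ae_upd hp hdist hindep k false h]
    with ω h1 h2
  simp only [Tfun, h1, h2]

/-- The norm bound constant for the gradient operator. -/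
def KT (p : ℕ → ℝ) (k : ℕ) : ℝ≥0∞ :=
  ENNReal.ofReal (Real.sqrt (p k * (1 - p k))) *
    ((ENNReal.ofReal (rk p k true))⁻¹ ^ (1 / (2:ℝ≥0∞)).toReal +
     (ENNReal.ofReal (rk p k false))⁻¹ ^ (1 / (2:ℝ≥0∞)).toReal)

lemma KT_ne_top (hp : ∀ n, 0 < p n ∧ p n < 1) (k : ℕ) : KT p k ≠ ⊤ := by
  have h1 : (ENNReal.ofReal (rk p k true))⁻¹ ≠ ⊤ := by
    simp [ENNReal.inv_ne_top, ENNReal.ofReal_eq_zero, not_le, rk_pos hp k true]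
  have h2 : (ENNReal.ofReal (rk p k false))⁻¹ ≠ ⊤ := by
    simp [ENNReal.inv_ne_top, ENNReal.ofReal_eq_zero, not_le, rk_pos hp k false]
  have e1 : (ENNReal.ofReal (rk p k true))⁻¹ ^ (1 / (2:ℝ≥0∞)).toReal ≠ ⊤ :=
    ENNReal.rpow_ne_top_of_nonneg (by positivity) h1
  have e2 : (ENNReal.ofReal (rk p k false))⁻¹ ^ (1 / (2:ℝ≥0∞)).toReal ≠ ⊤ :=
    ENNReal.rpow_ne_top_of_nonneg (by positivity) h2
  exact ENNReal.mul_ne_top ENNReal.ofReal_ne_top (ENNReal.add_ne_top.2 ⟨e1, e2⟩)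

lemma eLpNorm_Tfun_le (hp : ∀ n, 0 < p n ∧ p n < 1)
    (hdist : ∀ n, P {ω : Omega | ω n = true} = ENNReal.ofReal (p n))
    (hindep : iIndepFun (fun n (ω : Omega) => ω n) P)
    (k : ℕ) {f : Omega → ℝ} (hf : AEStronglyMeasurable f P) :
    eLpNorm (Tfun p k f) 2 P ≤ KT p k * eLpNorm f 2 P := by
  set c := Real.sqrt (p k * (1 - p k)) with hc
  have hc0 : 0 ≤ c := Real.sqrt_nonneg _
  have h1 : AEStronglyMeasurable (fun ω => f (upd k true ω)) P :=
    aesm_comp_upd hp hdist hindep k true hf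
  have h2 : AEStronglyMeasurable (fun ω => f (upd k false ω)) P :=
    aesm_comp_upd hp hdist hindep k false hf
  have heq : Tfun p k f =
      c • ((fun ω => f (upd k true ω)) - fun ω => f (upd k false ω)) := by
    funext ω; simp [Tfun, smul_eq_mul, hc]
  rw [heq, eLpNorm_const_smul]
  have hnorm : ‖c‖ₑ = ENNReal.ofReal c := by
    rw [← Real.enorm_eq_ofReal hc0]
  rw [hnorm]
  have hsub : eLpNorm ((fun ω => f (upd k true ω)) - fun ω => f (upd k false ω)) 2 P ≤
      eLpNorm (fun ω => f (upd k true ω)) 2 P +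
        eLpNorm (fun ω => f (upd k false ω)) 2 P :=
    eLpNorm_sub_le h1 h2 one_le_two
  calc ENNReal.ofReal c *
      eLpNorm ((fun ω => f (upd k true ω)) - fun ω => f (upd k false ω)) 2 P
      ≤ ENNReal.ofReal c *
        (eLpNorm (fun ω => f (upd k true ω)) 2 P +
          eLpNorm (fun ω => f (upd k false ω)) 2 P) := mul_le_mul_right hsub _
    _ ≤ ENNReal.ofReal c *
        ((ENNReal.ofReal (rk p k true))⁻¹ ^ (1 / (2:ℝ≥0∞)).toReal * eLpNorm f 2 P +
         (ENNReal.ofReal (rk p k false))⁻¹ ^ (1 / (2:ℝ≥0∞)).toReal * eLpNorm f 2 P) := by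
        refine mul_le_mul_right (add_le_add ?_ ?_) _
        · exact eLpNorm_comp_upd_le hp hdist hindep k true hf
        · exact eLpNorm_comp_upd_le hp hdist hindep k false hf
    _ = KT p k * eLpNorm f 2 P := by
        rw [KT]
        ring

lemma memLp_Tfun (hp : ∀ n, 0 < p n ∧ p n < 1)
    (hdist : ∀ n, P {ω : Omega | ω n = true} = ENNReal.ofReal (p n))
    (hindep : iIndepFun (fun n (ω : Omega) => ω n) P)
    (k : ℕ) {f : Omega → ℝ} (hf : MemLp f 2 P) :
    MemLp (Tfun p k f) 2 P := by
  refine ⟨?_, ?_⟩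
  · have h1 := aesm_comp_upd hp hdist hindep k true hf.1
    have h2 := aesm_comp_upd hp hdist hindep k false hf.1
    exact ((h1.sub h2).const_smul (Real.sqrt (p k * (1 - p k)))).congr (by
      filter_upwards with ω
      simp [Tfun, smul_eq_mul])
  · calc eLpNorm (Tfun p k f) 2 P ≤ KT p k * eLpNorm f 2 P :=
        eLpNorm_Tfun_le hp hdist hindep k hf.1
      _ < ⊤ := ENNReal.mul_lt_top (KT_ne_top hp k).lt_top hf.2

variable (p P)

/-- The gradient operator as a continuous linear map on `L²`. -/
def TOp (hp : ∀ n, 0 < p n ∧ p n < 1)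
    (hdist : ∀ n, P {ω : Omega | ω n = true} = ENNReal.ofReal (p n))
    (hindep : iIndepFun (fun n (ω : Omega) => ω n) P)
    (k : ℕ) : Lp ℝ 2 P →L[ℝ] Lp ℝ 2 P :=
  LinearMap.mkContinuous
    { toFun := fun f => (memLp_Tfun hp hdist hindep k (Lp.memLp f)).toLp
        (Tfun p k (f : Omega → ℝ))
      map_add' := by
        intro f g
        rw [← MemLp.toLp_add]
        refine MemLp.toLp_congr _ _ ?_
        refine (Tfun_congr hp hdist hindep k (Lp.coeFn_add f g)).trans ?_
        rw [Tfun_add]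
      map_smul' := by
        intro a f
        simp only [RingHom.id_apply]
        rw [← MemLp.toLp_const_smul]
        refine MemLp.toLp_congr _ _ ?_
        refine (Tfun_congr hp hdist hindep k (Lp.coeFn_smul a f)).trans ?_
        rw [Tfun_smul] }
    (KT p k).toReal
    (by
      intro f
      simp only [LinearMap.coe_mk, AddHom.coe_mk]
      rw [Lp.norm_toLp, Lp.norm_def]
      have hb : eLpNorm (Tfun p k (f : Omega → ℝ)) 2 P ≤
          KT p k * eLpNorm (f : Omega → ℝ) 2 P :=
        eLpNorm_Tfun_le hp hdist hindep k (Lp.aestronglyMeasurable f)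
      have hfin : KT p k * eLpNorm (f : Omega → ℝ) 2 P ≠ ⊤ :=
        ENNReal.mul_ne_top (KT_ne_top hp k) (Lp.eLpNorm_ne_top f)
      calc (eLpNorm (Tfun p k (f : Omega → ℝ)) 2 P).toReal
          ≤ (KT p k * eLpNorm (f : Omega → ℝ) 2 P).toReal := ENNReal.toReal_mono hfin hb
        _ = (KT p k).toReal * (eLpNorm (f : Omega → ℝ) 2 P).toReal := ENNReal.toReal_mul)

variable {p P}

lemma TOp_apply (hp : ∀ n, 0 < p n ∧ p n < 1)
    (hdist : ∀ n, P {ω : Omega | ω n = true} = ENNReal.ofReal (p n))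
    (hindep : iIndepFun (fun n (ω : Omega) => ω n) P)
    (k : ℕ) (f : Lp ℝ 2 P) :
    TOp p P hp hdist hindep k f =
      (memLp_Tfun hp hdist hindep k (Lp.memLp f)).toLp (Tfun p k (f : Omega → ℝ)) :=
  rfl

lemma sqrt_pq_pos (hp : ∀ n, 0 < p n ∧ p n < 1) (k : ℕ) :
    0 < Real.sqrt (p k * (1 - p k)) :=
  Real.sqrt_pos.2 (mul_pos (hp k).1 (by linarith [(hp k).2]))

lemma Zf_upd_ne (k j : ℕ) (hj : j ≠ k) (b : Bool) (ω : Omega) :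
    Zf p j (upd k b ω) = Zf p j ω := by
  simp [Zf, zeta, upd, Function.update_apply, hj]

lemma Tfun_ZSf (hp : ∀ n, 0 < p n ∧ p n < 1) (k : ℕ) (σ : Finset ℕ) :
    Tfun p k (ZSf p σ) = if k ∈ σ then ZSf p (σ.erase k) else 0 := by
  have hs := sqrt_pq_pos hp k
  funext ω
  by_cases hk : k ∈ σ
  · rw [if_pos hk]
    have e : ∀ b, ZSf p σ (upd k b ω) = Zf p k (upd k b ω) * ZSf p (σ.erase k) ω := by
      intro b
      rw [ZSf, ← Finset.mul_prod_erase σ _ hk]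
      congr 1
      refine Finset.prod_congr rfl ?_
      intro j hj
      exact Zf_upd_ne k j (Finset.ne_of_mem_erase hj) b ω
    have hz : Zf p k (upd k true ω) - Zf p k (upd k false ω) =
        1 / Real.sqrt (p k * (1 - p k)) := by
      have ht : zeta k (upd k true ω) = 1 := by simp [zeta, upd]
      have hf : zeta k (upd k false ω) = -1 := by simp [zeta, upd]
      rw [Zf, Zf, ht, hf, div_sub_div_same]
      rw [show (1 : ℝ) + (1 - p k) - p k - (-1 + (1 - p k) - p k) = 2 by ring]
      rw [div_eq_div_iff (by positivity) (ne_of_gt hs)]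
      ring
    show Real.sqrt (p k * (1 - p k)) * (ZSf p σ (upd k true ω) - ZSf p σ (upd k false ω)) = _
    rw [e true, e false, ← sub_mul, hz, ← mul_assoc, mul_one_div,
      div_self (ne_of_gt hs), one_mul]
  · rw [if_neg hk]
    have e : ∀ b, ZSf p σ (upd k b ω) = ZSf p σ ω := by
      intro b
      refine Finset.prod_congr rfl ?_
      intro j hj
      exact Zf_upd_ne k j (fun h => hk (h ▸ hj)) b ω
    show Real.sqrt (p k * (1 - p k)) * (ZSf p σ (upd k true ω) - ZSf p σ (upd k false ω)) = _
    rw [e true, e false, sub_self, mul_zero, Pi.zero_apply]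

lemma TOp_ZLp (hp : ∀ n, 0 < p n ∧ p n < 1)
    (hdist : ∀ n, P {ω : Omega | ω n = true} = ENNReal.ofReal (p n))
    (hindep : iIndepFun (fun n (ω : Omega) => ω n) P)
    (k : ℕ) (σ : Finset ℕ) :
    TOp p P hp hdist hindep k (ZLp p P σ) =
      if k ∈ σ then ZLp p P (σ.erase k) else 0 := by
  rw [TOp_apply]
  have hrep : ((ZLp p P σ : Lp ℝ 2 P) : Omega → ℝ) =ᵐ[P] ZSf p σ :=
    MemLp.coeFn_toLp (memLp_ZSf p P σ)
  have h1 : Tfun p k ((ZLp p P σ : Lp ℝ 2 P) : Omega → ℝ) =ᵐ[P]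
      Tfun p k (ZSf p σ) := Tfun_congr hp hdist hindep k hrep
  by_cases hk : k ∈ σ
  · rw [if_pos hk]
    have h2 : Tfun p k (ZSf p σ) = ZSf p (σ.erase k) := by
      rw [Tfun_ZSf hp k σ, if_pos hk]
    rw [ZLp]
    exact MemLp.toLp_congr _ _ (h1.trans (h2 ▸ Filter.EventuallyEq.rfl))
  · rw [if_neg hk]
    have h2 : Tfun p k (ZSf p σ) = 0 := by
      rw [Tfun_ZSf hp k σ, if_neg hk]
    rw [show (0 : Lp ℝ 2 P) = MemLp.toLp (0 : Omega → ℝ) (MemLp.zero) from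
      (MemLp.toLp_zero _).symm]
    exact MemLp.toLp_congr _ _ (h1.trans (h2 ▸ Filter.EventuallyEq.rfl))

end TOp


section Density

open MeasurableSpace

/-- Cylinder sets depending on the first `n` coordinates. -/
def cyl : Set (Set Omega) :=
  {s | ∃ (n : ℕ) (S : Set (Fin n → Bool)), s = (fun ω (i : Fin n) => ω (i : ℕ)) ⁻¹' S}

lemma cyl_lift {n m : ℕ} (h : n ≤ m) (S : Set (Fin n → Bool)) :
    ((fun ω (i : Fin n) => ω (i : ℕ)) ⁻¹' S : Set Omega) =
      (fun ω (i : Fin m) => ω (i : ℕ)) ⁻¹'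
        {v | (fun i : Fin n => v (Fin.castLE h i)) ∈ S} := by
  ext ω
  simp only [Set.mem_preimage, Set.mem_setOf_eq]
  have : (fun i : Fin n => ω ((Fin.castLE h i : Fin m) : ℕ)) = fun i : Fin n => ω (i : ℕ) := by
    funext i
    rw [Fin.coe_castLE]
  rw [this]

lemma isSetAlgebra_cyl : IsSetAlgebra cyl where
  empty_mem := ⟨0, ∅, by simp⟩
  compl_mem := by
    rintro s ⟨n, S, rfl⟩
    exact ⟨n, Sᶜ, by rw [Set.preimage_compl]⟩
  union_mem := by
    rintro s t ⟨n, S, rfl⟩ ⟨m, T, rfl⟩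
    refine ⟨max n m, {v | (fun i : Fin n => v (Fin.castLE (le_max_left n m) i)) ∈ S} ∪
      {v | (fun i : Fin m => v (Fin.castLE (le_max_right n m) i)) ∈ T}, ?_⟩
    rw [cyl_lift (le_max_left n m) S, cyl_lift (le_max_right n m) T, Set.preimage_union]

lemma gen_cyl : (inferInstance : MeasurableSpace Omega) = MeasurableSpace.generateFrom cyl := by
  apply le_antisymm
  · rw [show (inferInstance : MeasurableSpace Omega) =
      ⨆ n, MeasurableSpace.comap (fun ω : Omega => ω n) ⊤ from rfl]
    apply iSup_le
    intro n s hs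
    obtain ⟨T, -, rfl⟩ := hs
    refine measurableSet_generateFrom ?_
    refine ⟨n + 1, {v : Fin (n+1) → Bool | v ⟨n, n.lt_succ_self⟩ ∈ T}, ?_⟩
    ext ω
    simp
  · rw [MeasurableSpace.generateFrom_le_iff]
    rintro s ⟨n, S, rfl⟩
    have hr : Measurable (fun ω : Omega => fun i : Fin n => ω (i : ℕ)) :=
      measurable_pi_lambda _ (fun i => measurable_pi_apply (i : ℕ))
    exact hr (Set.toFinite S).measurableSet

/-- The coordinate indicator `1_{ω i = b}` is an affine function of `Z_i`. -/
lemma indFun_eq (p : ℕ → ℝ) (hp : ∀ n, 0 < p n ∧ p n < 1) (i : ℕ) (b : Bool) :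
    (fun ω : Omega => if ω i = b then (1:ℝ) else 0) =
      fun ω => (if b then Real.sqrt (p i * (1 - p i)) else -Real.sqrt (p i * (1 - p i))) *
        Zf p i ω + (if b then p i else 1 - p i) := by
  have hs : Real.sqrt (p i * (1 - p i)) ≠ 0 :=
    ne_of_gt (sqrt_pq_pos hp i)
  have hsq : Real.sqrt (p i * (1 - p i)) * Real.sqrt (p i * (1 - p i)) = p i * (1 - p i) :=
    Real.mul_self_sqrt (le_of_lt (mul_pos (hp i).1 (by linarith [(hp i).2])))
  funext ω
  have key : ∀ x : ℝ, Real.sqrt (p i * (1 - p i)) *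
      ((x + (1 - p i) - p i) / (2 * Real.sqrt (p i * (1 - p i)))) = (x + 1 - 2 * p i) / 2 := by
    intro x
    rw [eq_div_iff (two_ne_zero)]
    field_simp
    ring
  cases b <;> cases h : ω i <;>
    simp only [Zf, zeta, h, if_true, if_false, Bool.true_eq_false, Bool.false_eq_true] <;>
    first
      | (rw [neg_mul, key]; ring)
      | (rw [key]; ring)

lemma atom_mem (p : ℕ → ℝ) (hp : ∀ n, 0 < p n ∧ p n < 1) (n : ℕ) (v : Fin n → Bool) :
    (fun ω : Omega => if (fun i : Fin n => ω (i : ℕ)) = v then (1:ℝ) else 0) ∈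
      Submodule.span ℝ (Set.range (ZSf p)) := by
  classical
  set α : Fin n → ℝ := fun i =>
    if v i then Real.sqrt (p i * (1 - p i)) else -Real.sqrt (p i * (1 - p i)) with hα
  set β : Fin n → ℝ := fun i => if v i then p i else 1 - p i with hβ
  have hprod : (fun ω : Omega => if (fun i : Fin n => ω (i : ℕ)) = v then (1:ℝ) else 0) =
      ∑ t ∈ (Finset.univ : Finset (Fin n)).powerset,
        ((∏ i ∈ t, α i) * ∏ i ∈ Finset.univ \ t, β i) •
          ZSf p (t.image (fun i : Fin n => (i : ℕ))) := by
    funext ω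
    rw [Finset.sum_apply]
    have step1 : (if (fun i : Fin n => ω (i : ℕ)) = v then (1:ℝ) else 0) =
        ∏ i : Fin n, (if ω (i : ℕ) = v i then (1:ℝ) else 0) := by
      rw [Finset.prod_boole]
      congr 1
      simp only [eq_iff_iff]
      constructor
      · intro h i _
        exact congrFun h i
      · intro h
        funext i
        exact h i (Finset.mem_univ i)
    rw [step1]
    have step2 : ∀ i : Fin n, (if ω (i : ℕ) = v i then (1:ℝ) else 0) =
        α i * Zf p (i : ℕ) ω + β i := by
      intro i
      have := congrFun (indFun_eq p hp (i : ℕ) (v i)) ω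
      rw [this, hα, hβ]
    rw [Finset.prod_congr rfl (fun i _ => step2 i), Finset.prod_add]
    refine Finset.sum_congr rfl ?_
    intro t _
    rw [Finset.prod_mul_distrib]
    have himg : ∏ i ∈ t.image (fun i : Fin n => (i : ℕ)), Zf p i ω =
        ∏ i ∈ t, Zf p (i : ℕ) ω :=
      Finset.prod_image (fun x _ y _ h => Fin.val_injective h)
    simp only [Pi.smul_apply, smul_eq_mul, ZSf]
    rw [himg]
    ring
  rw [hprod]
  refine Submodule.sum_mem _ ?_
  intro t _
  exact Submodule.smul_mem _ _ (Submodule.subset_span ⟨_, rfl⟩)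

lemma indicator_cyl_mem (p : ℕ → ℝ) (hp : ∀ n, 0 < p n ∧ p n < 1) {s : Set Omega}
    (hs : s ∈ cyl) (c : ℝ) :
    Set.indicator s (fun _ => c) ∈ Submodule.span ℝ (Set.range (ZSf p)) := by
  classical
  obtain ⟨n, S, rfl⟩ := hs
  have hrepr : Set.indicator ((fun ω (i : Fin n) => ω (i : ℕ)) ⁻¹' S) (fun _ => c) =
      ∑ v ∈ S.toFinset,
        c • (fun ω : Omega => if (fun i : Fin n => ω (i : ℕ)) = v then (1:ℝ) else 0) := by
    funext ω
    rw [Finset.sum_apply]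
    simp only [Pi.smul_apply, smul_eq_mul, mul_ite, mul_one, mul_zero]
    rw [Finset.sum_ite_eq S.toFinset (fun i : Fin n => ω (i : ℕ)) (fun _ => c)]
    by_cases h : (fun i : Fin n => ω (i : ℕ)) ∈ S
    · rw [Set.indicator_of_mem
        (show ω ∈ (fun ω (i : Fin n) => ω (i : ℕ)) ⁻¹' S from h),
        if_pos (Set.mem_toFinset.2 h)]
    · rw [Set.indicator_of_notMem
        (show ω ∉ (fun ω (i : Fin n) => ω (i : ℕ)) ⁻¹' S from h),
        if_neg (fun hc => h (Set.mem_toFinset.1 hc))]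
  rw [hrepr]
  exact Submodule.sum_mem _ fun v _ => Submodule.smul_mem _ _ (atom_mem p hp n v)

lemma toLp_span_mem (p : ℕ → ℝ) (P : Measure Omega) [IsProbabilityMeasure P]
    {g : Omega → ℝ} (hg : g ∈ Submodule.span ℝ (Set.range (ZSf p))) :
    ∃ h : MemLp g 2 P, h.toLp g ∈ Submodule.span ℝ (Set.range (fun σ => ZLp p P σ)) := by
  induction hg using Submodule.span_induction with
  | mem x hx =>
    obtain ⟨σ, rfl⟩ := hx
    exact ⟨memLp_ZSf p P σ, Submodule.subset_span ⟨σ, rfl⟩⟩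
  | zero =>
    refine ⟨MemLp.zero, ?_⟩
    rw [MemLp.toLp_zero]
    exact Submodule.zero_mem _
  | add x y hx hy ihx ihy =>
    obtain ⟨h1, m1⟩ := ihx
    obtain ⟨h2, m2⟩ := ihy
    refine ⟨h1.add h2, ?_⟩
    rw [show (h1.add h2).toLp (x + y) = h1.toLp x + h2.toLp y from MemLp.toLp_add h1 h2]
    exact Submodule.add_mem _ m1 m2
  | smul a x hx ih =>
    obtain ⟨h1, m1⟩ := ih
    refine ⟨h1.const_smul a, ?_⟩
    rw [show (h1.const_smul a).toLp (a • x) = a • h1.toLp x from MemLp.toLp_const_smul a h1]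
    exact Submodule.smul_mem _ _ m1

lemma dense_span_ZLp (p : ℕ → ℝ) (P : Measure Omega) [IsProbabilityMeasure P]
    (hp : ∀ n, 0 < p n ∧ p n < 1) :
    Dense (↑(Submodule.span ℝ (Set.range (fun σ => ZLp p P σ))) : Set (Lp ℝ 2 P)) := by
  haveI : Fact ((2:ℝ≥0∞) ≠ ⊤) := ⟨by norm_num⟩
  have hMD : P.MeasureDense cyl :=
    Measure.MeasureDense.of_generateFrom_isSetAlgebra_finite P isSetAlgebra_cyl gen_cyl
  set Sp := Submodule.span ℝ (Set.range (fun σ => ZLp p P σ)) with hSp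
  intro f
  suffices h : f ∈ closure (↑Sp : Set (Lp ℝ 2 P)) by exact h
  have hclosed : IsClosed (↑Sp.topologicalClosure : Set (Lp ℝ 2 P)) :=
    Submodule.isClosed_topologicalClosure _
  have key : ∀ f : Lp ℝ 2 P, f ∈ Sp.topologicalClosure := by
    refine fun f => Lp.induction (by norm_num : (2:ℝ≥0∞) ≠ ⊤)
      (fun f => f ∈ Sp.topologicalClosure) ?_ ?_ ?_ f
    · intro c s hs hμs
      rw [Lp.simpleFunc.coe_indicatorConst]
      have h1 := hMD.indicatorConstLp_subset_closure 2 c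
      have h2 : indicatorConstLp 2 hs hμs.ne c ∈
          closure {x | ∃ s, ∃ (hs : s ∈ cyl) (hμs : P s ≠ ⊤),
            indicatorConstLp 2 (hMD.measurable s hs) hμs c = x} :=
        h1 ⟨s, hs, hμs.ne, rfl⟩
      have h3 : {x | ∃ s, ∃ (hs : s ∈ cyl) (hμs : P s ≠ ⊤),
          indicatorConstLp 2 (hMD.measurable s hs) hμs c = x} ⊆
            (↑Sp.topologicalClosure : Set (Lp ℝ 2 P)) := by
        rintro - ⟨t, ht, hμt, rfl⟩
        obtain ⟨hmem, hsp⟩ := toLp_span_mem p P (indicator_cyl_mem p hp ht c)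
        have : indicatorConstLp 2 (hMD.measurable t ht) hμt c =
            hmem.toLp (Set.indicator t (fun _ => c)) :=
          MemLp.toLp_congr _ _ Filter.EventuallyEq.rfl
        rw [this]
        exact Submodule.le_topologicalClosure Sp hsp
      have := closure_minimal h3 hclosed
      exact this h2
    · intro f g hf hg hdisj hPf hPg
      exact Submodule.add_mem _ hPf hPg
    · exact hclosed
  have := key f
  rw [← Submodule.topologicalClosure_coe]
  exact this

end Density

set_option synthInstance.maxHeartbeats 1000000 in
set_option maxHeartbeats 1000000 in
theorem contraction_decreases_gradient_norm
    (p : ℕ → ℝ) (P : Measure Omega) [IsProbabilityMeasure P]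
    (hp : ∀ n, 0 < p n ∧ p n < 1)
    (hdist : ∀ n, P {ω : Omega | ω n = true} = ENNReal.ofReal (p n))
    (hindep : iIndepFun (fun n (ω : Omega) => ω n) P)
    (D : ℕ → (Lp ℝ 2 P →L[ℝ] Lp ℝ 2 P))
    (hD : ∀ (k : ℕ) (σ : Finset ℕ),
      D k (ZLp p P σ) = if k ∈ σ then ZLp p P (σ.erase k) else 0)
    (C : ℝ → ℝ) (hC0 : C 0 = 0) (hC : ∀ s t : ℝ, |C s - C t| ≤ |s - t|)
    (ξ : Lp ℝ 2 P) (k : ℕ) :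
    ∃ hmem : MemLp (fun ω => C ((ξ : Omega → ℝ) ω)) 2 P,
      ‖D k (hmem.toLp _)‖ ≤ ‖D k ξ‖ := by
  have hL : LipschitzWith 1 C :=
    LipschitzWith.of_dist_le_mul (fun s t => by
      rw [Real.dist_eq, Real.dist_eq, NNReal.coe_one, one_mul]
      exact hC s t)
  have haesm : AEStronglyMeasurable (fun ω => C ((ξ : Omega → ℝ) ω)) P :=
    hL.continuous.comp_aestronglyMeasurable (Lp.aestronglyMeasurable ξ)
  have hbound : ∀ x : ℝ, ‖C x‖ ≤ ‖x‖ := by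
    intro x
    have := hC x 0
    rw [hC0, sub_zero, sub_zero] at this
    simpa [Real.norm_eq_abs] using this
  have hmem : MemLp (fun ω => C ((ξ : Omega → ℝ) ω)) 2 P :=
    ⟨haesm, lt_of_le_of_lt
      (eLpNorm_mono_ae (Filter.Eventually.of_forall fun ω => hbound _))
      (Lp.eLpNorm_lt_top ξ)⟩
  refine ⟨hmem, ?_⟩
  set T := TOp p P hp hdist hindep k with hT
  have hDT : D k = T := by
    refine ContinuousLinearMap.ext_on (dense_span_ZLp p P hp) ?_
    rintro x ⟨σ, rfl⟩
    show D k (ZLp p P σ) = T (ZLp p P σ)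
    rw [hD k σ, hT, TOp_ZLp hp hdist hindep k σ]
  rw [hDT]
  have e1 : ‖T (MemLp.toLp (fun ω => C ((ξ : Omega → ℝ) ω)) hmem)‖ =
      (eLpNorm (Tfun p k (fun ω => C ((ξ : Omega → ℝ) ω))) 2 P).toReal := by
    rw [hT, TOp_apply, Lp.norm_toLp,
      eLpNorm_congr_ae (Tfun_congr hp hdist hindep k (MemLp.coeFn_toLp hmem))]
  have e2 : ‖T ξ‖ = (eLpNorm (Tfun p k ((ξ : Omega → ℝ))) 2 P).toReal := by
    rw [hT, TOp_apply, Lp.norm_toLp]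
  rw [e1, e2]
  have hpt : ∀ᵐ ω ∂P, ‖Tfun p k (fun ω' => C ((ξ : Omega → ℝ) ω')) ω‖ ≤
      ‖Tfun p k ((ξ : Omega → ℝ)) ω‖ := by
    refine Filter.Eventually.of_forall ?_
    intro ω
    simp only [Tfun, Real.norm_eq_abs, abs_mul]
    refine mul_le_mul_of_nonneg_left ?_ (abs_nonneg _)
    exact hC _ _
  have hfin : eLpNorm (Tfun p k ((ξ : Omega → ℝ))) 2 P ≠ ⊤ :=
    (memLp_Tfun hp hdist hindep k (Lp.memLp ξ)).2.ne
  exact ENNReal.toReal_mono hfin (eLpNorm_mono_ae hpt)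

end
end

section
/- The w-Ornstein–Uhlenbeck semigroup is a Markov semigroup: for every t ≥ 0 and every ξ ∈ L²(Ω, ℙ) with 0 ≤ ξ ≤ 1 ℙ-almost everywhere, one has 0 ≤ P^w_tξ ≤ 1 ℙ-almost everywhere. -/
open MeasureTheory ProbabilityTheory
open scoped RealInnerProductSpace ENNReal

noncomputable section

/-! ### Auxiliary machinery -/

section Aux

lemma measurable_Zf' (p : ℕ → ℝ) (j : ℕ) : Measurable (Zf p j) := by
  have h1 := measurable_ZSf p {j}
  have h2 : ZSf p {j} = Zf p j := by funext ω; simp [ZSf]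
  rwa [h2] at h1

lemma abs_ZSf_le (p : ℕ → ℝ) (σ : Finset ℕ) (ω : Omega) :
    |ZSf p σ ω| ≤ ∏ j ∈ σ, Mb p j := by
  calc |∏ j ∈ σ, Zf p j ω| = ∏ j ∈ σ, |Zf p j ω| := Finset.abs_prod σ _
  _ ≤ ∏ j ∈ σ, Mb p j :=
      Finset.prod_le_prod (fun j _ => abs_nonneg _) (fun j _ => abs_Zf_le p j ω)

lemma Mb_prod_nonneg (p : ℕ → ℝ) (σ : Finset ℕ) : 0 ≤ ∏ j ∈ σ, Mb p j :=
  Finset.prod_nonneg fun j _ => le_trans (abs_nonneg _) (abs_Zf_le p j (fun _ => true))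

/-- The coordinate σ-algebras. -/
def Mc (i : ℕ) : MeasurableSpace Omega :=
  MeasurableSpace.comap (fun ω : Omega => ω i) inferInstance

/-- The coordinate filtration. -/
def Filt (n : ℕ) : MeasurableSpace Omega := ⨆ i ∈ Finset.range n, Mc i

lemma Mc_le (i : ℕ) : Mc i ≤ (inferInstance : MeasurableSpace Omega) :=
  measurable_iff_comap_le.mp (measurable_pi_apply i)

lemma Filt_le (n : ℕ) : Filt n ≤ (inferInstance : MeasurableSpace Omega) :=
  iSup₂_le fun i _ => Mc_le i

lemma Filt_mono : Monotone Filt := fun m n hmn =>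
  biSup_mono fun i hi => Finset.mem_range.mpr (lt_of_lt_of_le (Finset.mem_range.mp hi) hmn)

lemma pi_eq_iSup_Mc : (inferInstance : MeasurableSpace Omega) = ⨆ i, Mc i := rfl

lemma iSup_Filt : (⨆ n, Filt n) = (inferInstance : MeasurableSpace Omega) := by
  refine le_antisymm (iSup_le fun n => iSup₂_le fun i _ => Mc_le i) ?_
  rw [pi_eq_iSup_Mc]
  refine iSup_le fun i => le_trans ?_ (le_iSup Filt (i + 1))
  exact le_iSup₂ (f := fun i _ => Mc i) i (Finset.mem_range.mpr (Nat.lt_succ_self i))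

lemma measurable_Mc_Zf (p : ℕ → ℝ) (j : ℕ) : Measurable[Mc j] (Zf p j) := by
  have h1 : Measurable[Mc j] (fun ω : Omega => ω j) := measurable_iff_comap_le.mpr le_rfl
  exact Measurable.comp (f := fun ω : Omega => ω j)
    (g := fun b : Bool => ((if b then (1:ℝ) else -1) + (1 - p j) - p j) /
      (2 * Real.sqrt (p j * (1 - p j)))) Measurable.of_discrete h1

lemma measurable_M2_ZSf (p : ℕ → ℝ) (j₀ : ℕ) (σ : Finset ℕ) (hσ : j₀ ∉ σ) :
    Measurable[⨆ i ∈ ({j₀}ᶜ : Set ℕ), Mc i] (ZSf p σ) := by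
  refine Finset.measurable_prod σ fun i hi => ?_
  exact (measurable_Mc_Zf p i).mono
    (le_iSup₂ (f := fun i (_ : i ∈ ({j₀}ᶜ : Set ℕ)) => Mc i) i (fun h => hσ (h ▸ hi))) le_rfl

lemma indepFun_Zf (p : ℕ → ℝ) (P : Measure Omega) [IsProbabilityMeasure P]
    (hindep : iIndepFun (fun n (ω : Omega) => ω n) P)
    (j₀ : ℕ) (f : Omega → ℝ) (hf : Measurable[⨆ i ∈ ({j₀}ᶜ : Set ℕ), Mc i] f) :
    IndepFun (Zf p j₀) f P := by
  have hI : Indep (⨆ i ∈ ({j₀} : Set ℕ), Mc i) (⨆ i ∈ ({j₀}ᶜ : Set ℕ), Mc i) P :=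
    indep_iSup_of_disjoint (fun i => Mc_le i) hindep.iIndep disjoint_compl_right
  rw [iSup_singleton] at hI
  exact indep_of_indep_of_le_left (indep_of_indep_of_le_right hI
    (measurable_iff_comap_le.mp hf)) (measurable_iff_comap_le.mp (measurable_Mc_Zf p j₀))

/-- The key vanishing lemma: if `A` is measurable w.r.t. the first `n` coordinates and
`σ` contains an index `≥ n`, then `∫ 𝟙_A Z_σ = 0`. -/
lemma key_vanish (p : ℕ → ℝ) (P : Measure Omega) [IsProbabilityMeasure P]
    (hp : ∀ n, 0 < p n ∧ p n < 1)
    (hdist : ∀ n, P {ω : Omega | ω n = true} = ENNReal.ofReal (p n))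
    (hindep : iIndepFun (fun n (ω : Omega) => ω n) P)
    (n : ℕ) (A : Set Omega) (hA : MeasurableSet[Filt n] A)
    (σ : Finset ℕ) (j₀ : ℕ) (hj₀ : j₀ ∈ σ) (hn : j₀ ∉ Finset.range n) :
    ∫ ω, A.indicator (fun _ => (1:ℝ)) ω * ZSf p σ ω ∂P = 0 := by
  set f : Omega → ℝ := fun ω => A.indicator (fun _ => (1:ℝ)) ω * ZSf p (σ.erase j₀) ω with hfdef
  have hfmeas : Measurable[⨆ i ∈ ({j₀}ᶜ : Set ℕ), Mc i] f := by
    have hFle : Filt n ≤ ⨆ i ∈ ({j₀}ᶜ : Set ℕ), Mc i := by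
      refine iSup₂_le fun i hi => ?_
      exact le_iSup₂ (f := fun i (_ : i ∈ ({j₀}ᶜ : Set ℕ)) => Mc i) i (fun h => hn (h ▸ hi))
    exact Measurable.mul (Measurable.indicator measurable_const (hFle A hA))
      (measurable_M2_ZSf p j₀ (σ.erase j₀) (Finset.notMem_erase j₀ σ))
  have hIF : IndepFun (Zf p j₀) f P := indepFun_Zf p P hindep j₀ f hfmeas
  have hsplit : ∀ ω, A.indicator (fun _ => (1:ℝ)) ω * ZSf p σ ω = Zf p j₀ ω * f ω := by
    intro ω
    rw [hfdef]
    simp only [ZSf, ← Finset.mul_prod_erase σ _ hj₀]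
    ring
  have hmain := hIF.integral_mul_eq_mul_integral
    ((measurable_Mc_Zf p j₀).mono (Mc_le j₀) le_rfl).aestronglyMeasurable
    ((hfmeas.mono (iSup₂_le fun i _ => Mc_le i) le_rfl)).aestronglyMeasurable
  calc ∫ ω, A.indicator (fun _ => (1:ℝ)) ω * ZSf p σ ω ∂P
      = ∫ ω, (Zf p j₀ * f) ω ∂P := by
        refine integral_congr_ae (Filter.Eventually.of_forall fun ω => ?_)
        simpa using hsplit ω
    _ = (∫ ω, Zf p j₀ ω ∂P) * ∫ ω, f ω ∂P := hmain
    _ = 0 := by rw [integral_Zf p P hp hdist j₀, zero_mul]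

lemma integral_ZSf (p : ℕ → ℝ) (P : Measure Omega) [IsProbabilityMeasure P]
    (hp : ∀ n, 0 < p n ∧ p n < 1)
    (hdist : ∀ n, P {ω : Omega | ω n = true} = ENNReal.ofReal (p n))
    (hindep : iIndepFun (fun n (ω : Omega) => ω n) P)
    (σ : Finset ℕ) (hσ : σ.Nonempty) : ∫ ω, ZSf p σ ω ∂P = 0 := by
  obtain ⟨j₀, hj₀⟩ := hσ
  have := key_vanish p P hp hdist hindep 0 Set.univ MeasurableSet.univ σ j₀ hj₀ (by simp)
  simpa [Set.indicator_univ] using this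

lemma factor_nonneg (p : ℕ → ℝ) (hp : ∀ n, 0 < p n ∧ p n < 1) (ρ : ℝ) (hρ0 : 0 < ρ)
    (hρ1 : ρ ≤ 1) (j : ℕ) (x y : Omega) : 0 ≤ 1 + ρ * (Zf p j x * Zf p j y) := by
  obtain ⟨hp0, hp1⟩ := hp j
  have hpq : 0 < p j * (1 - p j) := mul_pos hp0 (by linarith)
  by_cases h : x j = y j
  · have hxy : Zf p j x = Zf p j y := by unfold Zf zeta; rw [h]
    rw [hxy]
    nlinarith [mul_self_nonneg (Zf p j y)]
  · have hsq : (2 * Real.sqrt (p j * (1 - p j))) * (2 * Real.sqrt (p j * (1 - p j)))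
        = 4 * (p j * (1 - p j)) := by
      nlinarith [Real.mul_self_sqrt hpq.le]
    have hprod : Zf p j x * Zf p j y = -1 := by
      unfold Zf zeta
      rcases Bool.eq_false_or_eq_true (x j) with hx | hx <;>
        rcases Bool.eq_false_or_eq_true (y j) with hy | hy <;>
        first
          | (exact absurd (hx.trans hy.symm) h)
          | (rw [hx, hy]
             rw [div_mul_div_comm]
             rw [div_eq_iff (by nlinarith [Real.sqrt_pos.mpr hpq] :
               (2 * Real.sqrt (p j * (1 - p j))) * (2 * Real.sqrt (p j * (1 - p j))) ≠ 0)]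
             simp only [if_true, if_false, Bool.false_eq_true]
             nlinarith)
    rw [hprod]
    nlinarith

lemma K_expand (p : ℕ → ℝ) (w : ℕ → ℝ) (t : ℝ) (n : ℕ) (x y : Omega) :
    ∏ j ∈ Finset.range n, (1 + Real.exp (-(t * w j)) * (Zf p j x * Zf p j y))
      = ∑ σ ∈ (Finset.range n).powerset,
          Real.exp (-(t * cw w σ)) * (ZSf p σ x * ZSf p σ y) := by
  have h1 : ∀ j, (1 : ℝ) + Real.exp (-(t * w j)) * (Zf p j x * Zf p j y)
      = Real.exp (-(t * w j)) * (Zf p j x * Zf p j y) + 1 := fun j => by ring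
  simp_rw [h1, Finset.prod_add, Finset.prod_const_one, mul_one]
  refine Finset.sum_congr rfl fun σ hσ => ?_
  rw [Finset.prod_mul_distrib, Finset.prod_mul_distrib, ← Real.exp_sum]
  have h2 : ∑ j ∈ σ, -(t * w j) = -(t * cw w σ) := by
    rw [cw, Finset.mul_sum, ← Finset.sum_neg_distrib]
  rw [h2]; rfl

lemma integrable_of_bdd (P : Measure Omega) [IsProbabilityMeasure P] {f : Omega → ℝ} (C : ℝ)
    (hm : Measurable f) (hb : ∀ x, |f x| ≤ C) : Integrable f P :=
  memLp_one_iff_integrable.mp (MemLp.of_bound hm.aestronglyMeasurable C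
    (Filter.Eventually.of_forall (by simpa [Real.norm_eq_abs] using hb)))

/-- The central estimate: for any set `A` measurable w.r.t. finitely many coordinates,
`0 ≤ ∫_A P_t ξ ≤ P(A)`. -/
lemma setIntegral_Pt_bounds (p : ℕ → ℝ) (P : Measure Omega) [IsProbabilityMeasure P]
    (hp : ∀ n, 0 < p n ∧ p n < 1)
    (hdist : ∀ n, P {ω : Omega | ω n = true} = ENNReal.ofReal (p n))
    (hindep : iIndepFun (fun n (ω : Omega) => ω n) P)
    (w : ℕ → ℝ) (hw : ∀ n, 0 ≤ w n) (t : ℝ) (ht : 0 ≤ t) (ξ : Lp ℝ 2 P)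
    (hξ : ∀ᵐ ω ∂P, 0 ≤ (ξ : Omega → ℝ) ω ∧ (ξ : Omega → ℝ) ω ≤ 1)
    (h : Lp ℝ 2 P)
    (hs : HasSum (fun σ : Finset ℕ =>
      (Real.exp (-(t * cw w σ)) * ⟪ZLp p P σ, ξ⟫) • ZLp p P σ) h)
    (n : ℕ) (A : Set Omega) (hA : MeasurableSet[Filt n] A) :
    0 ≤ ∫ ω in A, (h : Omega → ℝ) ω ∂P ∧
      ∫ ω in A, (h : Omega → ℝ) ω ∂P ≤ (P A).toReal := by
  have hA' : MeasurableSet A := Filt_le n A hA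
  set pw := (Finset.range n).powerset with hpw
  set g : Lp ℝ 2 P := indicatorConstLp 2 hA' (measure_ne_top P A) (1:ℝ) with hg
  have hgco : ⇑g =ᵐ[P] A.indicator (fun _ => (1:ℝ)) := indicatorConstLp_coeFn
  have hZco : ∀ σ : Finset ℕ, ⇑(ZLp p P σ) =ᵐ[P] ZSf p σ := fun σ => MemLp.coeFn_toLp _
  set a : Finset ℕ → ℝ :=
    fun σ => ∫ ω, A.indicator (fun _ => (1:ℝ)) ω * ZSf p σ ω ∂P with ha
  set b : Finset ℕ → ℝ := fun σ => ∫ ω, ZSf p σ ω * (ξ : Omega → ℝ) ω ∂P with hb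
  -- inner products as integrals
  have hinnerg : ∀ σ : Finset ℕ, ⟪g, ZLp p P σ⟫ = a σ := by
    intro σ
    rw [L2.inner_def, ha]
    refine integral_congr_ae ?_
    filter_upwards [hgco, hZco σ] with ω h1 h2
    rw [h1, h2]; simp [RCLike.inner_apply]; ring
  have hinnerZ : ∀ σ : Finset ℕ, ⟪ZLp p P σ, ξ⟫ = b σ := by
    intro σ
    rw [L2.inner_def, hb]
    refine integral_congr_ae ?_
    filter_upwards [hZco σ] with ω h2
    rw [h2]; simp [RCLike.inner_apply]; ring
  -- the inner product with g, as a sum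
  have h0 : HasSum (fun σ : Finset ℕ =>
      Real.exp (-(t * cw w σ)) * b σ * (a σ)) ⟪g, h⟫ := by
    have h1 := (innerSL ℝ g).hasSum hs
    have h2 : (fun σ : Finset ℕ => innerSL ℝ g
        ((Real.exp (-(t * cw w σ)) * ⟪ZLp p P σ, ξ⟫) • ZLp p P σ))
        = fun σ : Finset ℕ => Real.exp (-(t * cw w σ)) * b σ * (a σ) := by
      funext σ
      simp only [innerSL_apply_apply]
      rw [real_inner_smul_right, hinnerg σ, hinnerZ σ]
    rwa [h2] at h1
  have hvanish : ∀ σ ∉ pw, Real.exp (-(t * cw w σ)) * b σ * (a σ) = 0 := by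
    intro σ hσ
    rw [Finset.mem_powerset] at hσ
    obtain ⟨j₀, hj₀σ, hj₀n⟩ := Finset.not_subset.mp hσ
    rw [show a σ = 0 from key_vanish p P hp hdist hindep n A hA σ j₀ hj₀σ hj₀n, mul_zero]
  have hSsum : ⟪g, h⟫ = ∑ σ ∈ pw, Real.exp (-(t * cw w σ)) * b σ * (a σ) :=
    h0.unique (hasSum_sum_of_ne_finset_zero hvanish)
  -- the inner product with g as a set integral
  have hgh : ⟪g, h⟫ = ∫ ω in A, (h : Omega → ℝ) ω ∂P := by
    rw [L2.inner_def, ← integral_indicator hA']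
    refine integral_congr_ae ?_
    filter_upwards [hgco] with ω h1
    rw [RCLike.inner_apply, conj_trivial, h1]
    by_cases hω : ω ∈ A <;> simp [Set.indicator_of_mem, Set.indicator_of_notMem, hω]
  -- the kernel function
  set F : Omega → ℝ :=
    fun y => ∑ σ ∈ pw, Real.exp (-(t * cw w σ)) * a σ * ZSf p σ y with hF
  have hFmeas : Measurable F := by
    refine Finset.measurable_sum pw fun σ _ => ?_
    exact (measurable_ZSf p σ).const_mul _
  have hindmeas : ∀ σ : Finset ℕ, Measurable fun x =>
      A.indicator (fun _ => (1:ℝ)) x * ZSf p σ x :=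
    fun σ => (measurable_const.indicator hA').mul (measurable_ZSf p σ)
  have hindbd : ∀ (σ : Finset ℕ) (x : Omega),
      |A.indicator (fun _ => (1:ℝ)) x * ZSf p σ x| ≤ ∏ j ∈ σ, Mb p j := by
    intro σ x
    rw [abs_mul]
    calc |A.indicator (fun _ => (1:ℝ)) x| * |ZSf p σ x| ≤ 1 * (∏ j ∈ σ, Mb p j) := by
          refine mul_le_mul ?_ (abs_ZSf_le p σ x) (abs_nonneg _) zero_le_one
          by_cases hx : x ∈ A <;> simp [hx]
      _ = ∏ j ∈ σ, Mb p j := one_mul _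
  have hindint : ∀ σ : Finset ℕ,
      Integrable (fun x => A.indicator (fun _ => (1:ℝ)) x * ZSf p σ x) P :=
    fun σ => integrable_of_bdd P _ (hindmeas σ) (hindbd σ)
  -- F y as an integral of a nonnegative kernel
  have hFval : ∀ y : Omega, F y = ∫ x, A.indicator (fun _ => (1:ℝ)) x *
      ∏ j ∈ Finset.range n, (1 + Real.exp (-(t * w j)) * (Zf p j x * Zf p j y)) ∂P := by
    intro y
    have h2 : ∀ x : Omega, A.indicator (fun _ => (1:ℝ)) x *
        ∏ j ∈ Finset.range n, (1 + Real.exp (-(t * w j)) * (Zf p j x * Zf p j y))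
        = ∑ σ ∈ pw, (Real.exp (-(t * cw w σ)) * ZSf p σ y) *
            (A.indicator (fun _ => (1:ℝ)) x * ZSf p σ x) := by
      intro x
      rw [K_expand p w t n x y, Finset.mul_sum]
      exact Finset.sum_congr rfl fun σ _ => by ring
    simp_rw [h2]
    rw [integral_finset_sum _ (fun σ _ => ((hindint σ).const_mul _))]
    rw [hF]
    refine Finset.sum_congr rfl fun σ _ => ?_
    rw [integral_const_mul]
    simp only [ha]
    ring
  have hFnonneg : ∀ y : Omega, 0 ≤ F y := by
    intro y
    rw [hFval y]
    refine integral_nonneg fun x => ?_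
    refine mul_nonneg (Set.indicator_nonneg (fun _ _ => zero_le_one) x) ?_
    refine Finset.prod_nonneg fun j _ => ?_
    exact factor_nonneg p hp _ (Real.exp_pos _)
      (Real.exp_le_one_iff.mpr (neg_nonpos.mpr (mul_nonneg ht (hw j)))) j x y
  -- bound and integrability for F
  set CF : ℝ := ∑ σ ∈ pw, |Real.exp (-(t * cw w σ)) * a σ| * ∏ j ∈ σ, Mb p j with hCF
  have hFbd : ∀ y : Omega, |F y| ≤ CF := by
    intro y
    rw [hF, hCF]
    refine le_trans (Finset.abs_sum_le_sum_abs _ _) (Finset.sum_le_sum fun σ _ => ?_)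
    rw [abs_mul]
    exact mul_le_mul_of_nonneg_left (abs_ZSf_le p σ y) (abs_nonneg _)
  have hFint : Integrable F P := integrable_of_bdd P CF hFmeas hFbd
  have hξint : Integrable (ξ : Omega → ℝ) P := (Lp.memLp ξ).integrable one_le_two
  have hZξint : ∀ σ : Finset ℕ, Integrable (fun y => ZSf p σ y * (ξ : Omega → ℝ) y) P :=
    fun σ => hξint.bdd_mul (c := ∏ j ∈ σ, Mb p j) (measurable_ZSf p σ).aestronglyMeasurable
      (Filter.Eventually.of_forall fun y => by
        simpa [Real.norm_eq_abs] using abs_ZSf_le p σ y)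
  have hFξint : Integrable (fun y => F y * (ξ : Omega → ℝ) y) P :=
    hξint.bdd_mul (c := CF) hFmeas.aestronglyMeasurable
      (Filter.Eventually.of_forall fun y => by simpa [Real.norm_eq_abs] using hFbd y)
  -- S = ∫ F ξ
  have hSint : ∑ σ ∈ pw, Real.exp (-(t * cw w σ)) * b σ * (a σ)
      = ∫ y, F y * (ξ : Omega → ℝ) y ∂P := by
    have h2 : ∀ y : Omega, F y * (ξ : Omega → ℝ) y
        = ∑ σ ∈ pw, (Real.exp (-(t * cw w σ)) * a σ) *
            (ZSf p σ y * (ξ : Omega → ℝ) y) := by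
      intro y
      rw [hF, Finset.sum_mul]
      exact Finset.sum_congr rfl fun σ _ => by ring
    simp_rw [h2]
    rw [integral_finset_sum _ (fun σ _ => ((hZξint σ).const_mul _))]
    refine Finset.sum_congr rfl fun σ _ => ?_
    rw [integral_const_mul]
    simp only [hb]
    ring
  -- lower bound
  have hlow : 0 ≤ ∑ σ ∈ pw, Real.exp (-(t * cw w σ)) * b σ * (a σ) := by
    rw [hSint]
    refine integral_nonneg_of_ae ?_
    filter_upwards [hξ] with y hy
    exact mul_nonneg (hFnonneg y) hy.1
  -- upper bound
  have hup : ∑ σ ∈ pw, Real.exp (-(t * cw w σ)) * b σ * (a σ) ≤ (P A).toReal := by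
    rw [hSint]
    have step1 : ∫ y, F y * (ξ : Omega → ℝ) y ∂P ≤ ∫ y, F y ∂P := by
      refine integral_mono_ae hFξint hFint ?_
      filter_upwards [hξ] with y hy
      calc F y * (ξ : Omega → ℝ) y ≤ F y * 1 :=
            mul_le_mul_of_nonneg_left hy.2 (hFnonneg y)
        _ = F y := mul_one _
    refine le_trans step1 (le_of_eq ?_)
    rw [hF]
    rw [integral_finset_sum _ (fun σ _ => ((integrable_of_bdd P _ (measurable_ZSf p σ)
      (abs_ZSf_le p σ)).const_mul _))]
    have hzero : ∀ σ ∈ pw, σ ≠ ∅ →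
        ∫ y, Real.exp (-(t * cw w σ)) * a σ * ZSf p σ y ∂P = 0 := by
      intro σ _ hσne
      rw [integral_const_mul,
        integral_ZSf p P hp hdist hindep σ (Finset.nonempty_iff_ne_empty.mpr hσne), mul_zero]
    rw [Finset.sum_eq_single ∅ hzero (fun hne => absurd
      (Finset.mem_powerset.mpr (Finset.empty_subset _)) hne)]
    rw [integral_const_mul]
    have he : Real.exp (-(t * cw w (∅ : Finset ℕ))) = 1 := by
      simp [cw]
    have hZe : ∀ y : Omega, ZSf p (∅ : Finset ℕ) y = 1 := fun y => by simp [ZSf]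
    have hae : a ∅ = (P A).toReal := by
      rw [ha]
      simp only [hZe, mul_one]
      rw [integral_indicator_const _ hA']
      simp [measureReal_def]
    simp only [he, one_mul, hZe]
    rw [integral_const]
    simp [hae]
  rw [← hgh, hSsum]
  exact ⟨hlow, hup⟩

/-- Extracting a.e. nonnegativity from set integrals over a sub-σ-algebra. -/
lemma ae_nonneg_of_setIntegral (P : Measure Omega) [IsProbabilityMeasure P]
    {m : MeasurableSpace Omega} (hm : m ≤ MeasurableSpace.pi)
    {f : Omega → ℝ} (hfm : StronglyMeasurable[m] f) (hfi : Integrable f P)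
    (hf : ∀ A : Set Omega, MeasurableSet[m] A → 0 ≤ ∫ ω in A, f ω ∂P) : 0 ≤ᵐ[P] f := by
  have h1 : Integrable f (P.trim hm) := hfi.trim hm hfm
  have h2 : 0 ≤ᵐ[P.trim hm] f := by
    refine ae_nonneg_of_forall_setIntegral_nonneg h1 fun s hs _ => ?_
    rw [← setIntegral_trim hm hfm hs]
    exact hf s hs
  exact ae_of_ae_trim hm h2

end Aux

theorem OU_semigroup_is_Markov
    (p : ℕ → ℝ) (P : Measure Omega) [IsProbabilityMeasure P]
    (hp : ∀ n, 0 < p n ∧ p n < 1)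
    (hdist : ∀ n, P {ω : Omega | ω n = true} = ENNReal.ofReal (p n))
    (hindep : iIndepFun (fun n (ω : Omega) => ω n) P)
    (w : ℕ → ℝ) (hw : ∀ n, 0 ≤ w n)
    (Pt : ℝ → Lp ℝ 2 P → Lp ℝ 2 P)
    (hPt : ∀ t ≥ (0 : ℝ), ∀ ξ : Lp ℝ 2 P,
      HasSum (fun σ : Finset ℕ => (Real.exp (-(t * cw w σ)) * ⟪ZLp p P σ, ξ⟫) • ZLp p P σ)
        (Pt t ξ))
    (t : ℝ) (ht : 0 ≤ t) (ξ : Lp ℝ 2 P)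
    (hξ : ∀ᵐ ω ∂P, 0 ≤ (ξ : Omega → ℝ) ω ∧ (ξ : Omega → ℝ) ω ≤ 1) :
    ∀ᵐ ω ∂P, 0 ≤ (Pt t ξ : Omega → ℝ) ω ∧ (Pt t ξ : Omega → ℝ) ω ≤ 1 := by
  classical
  set h : Lp ℝ 2 P := Pt t ξ with hh
  have hs := hPt t ht ξ
  have hint : Integrable (h : Omega → ℝ) P := (Lp.memLp h).integrable one_le_two
  have hbounds := setIntegral_Pt_bounds p P hp hdist hindep w hw t ht ξ hξ h hs
  -- conditional expectation bounds for each n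
  have hGbd : ∀ n : ℕ, ∀ᵐ ω ∂P,
      0 ≤ (P[(h : Omega → ℝ)|Filt n]) ω ∧ (P[(h : Omega → ℝ)|Filt n]) ω ≤ 1 := by
    intro n
    have hlow : 0 ≤ᵐ[P] P[(h : Omega → ℝ)|Filt n] := by
      refine ae_nonneg_of_setIntegral P (Filt_le n) stronglyMeasurable_condExp
        integrable_condExp fun A hA => ?_
      rw [setIntegral_condExp (Filt_le n) hint hA]
      exact (hbounds n A hA).1
    have hup : 0 ≤ᵐ[P] fun ω => 1 - (P[(h : Omega → ℝ)|Filt n]) ω := by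
      refine ae_nonneg_of_setIntegral P (Filt_le n)
        (stronglyMeasurable_const.sub stronglyMeasurable_condExp)
        ((integrable_const 1).sub integrable_condExp) fun A hA => ?_
      have hA' : MeasurableSet A := Filt_le n A hA
      rw [integral_sub ((integrable_const (1:ℝ)).integrableOn)
        (integrable_condExp.integrableOn)]
      rw [setIntegral_condExp (Filt_le n) hint hA, setIntegral_const]
      have := (hbounds n A hA).2
      simp only [smul_eq_mul, mul_one, measureReal_def]
      linarith
    filter_upwards [hlow, hup] with ω h1 h2
    exact ⟨h1, by simpa using h2⟩
  -- Lévy's upward theorem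
  set ℱ : Filtration ℕ (inferInstance : MeasurableSpace Omega) :=
    ⟨Filt, Filt_mono, Filt_le⟩ with hℱ
  have hmk := (Lp.aestronglyMeasurable h)
  set h' : Omega → ℝ := hmk.mk (h : Omega → ℝ) with hh'
  have hmkeq : (h : Omega → ℝ) =ᵐ[P] h' := hmk.ae_eq_mk
  have hmeas' : StronglyMeasurable[⨆ n, ℱ n] h' := by
    refine (hmk.stronglyMeasurable_mk).mono ?_
    exact le_of_eq (iSup_Filt).symm
  have htd : ∀ᵐ x ∂P, Filter.Tendsto (fun n => (P[h'|ℱ n]) x)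
      Filter.atTop (nhds (h' x)) :=
    (hint.congr hmkeq).tendsto_ae_condExp hmeas'
  have hcongr : ∀ n : ℕ, (P[h'|ℱ n]) =ᵐ[P] (P[(h : Omega → ℝ)|Filt n]) :=
    fun n => condExp_congr_ae hmkeq.symm
  filter_upwards [htd, ae_all_iff.mpr hGbd, ae_all_iff.mpr hcongr, hmkeq] with ω h1 h2 h3 h4
  have hT : Filter.Tendsto (fun n => (P[(h : Omega → ℝ)|Filt n]) ω)
      Filter.atTop (nhds ((h : Omega → ℝ) ω)) := by
    rw [h4]
    exact h1.congr fun n => h3 n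
  exact ⟨ge_of_tendsto' hT fun n => (h2 n).1, le_of_tendsto' hT fun n => (h2 n).2⟩


end
end
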